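/- arXiv:1711.10404 — 6 statements merged into one kernel-verified Lean document; each statement's English description precedes it below -/
import Mathlib

section
/- Let D = {(x,y) ∈ ℝ×ℝ² : ‖y‖² ≥ x²} \ {(0,0)}, and let J ⊂ ℝ be the set of all t ∈ ℝ such that 6·c_b·e^{−λ|t|} < min(a₂₂, a₃₃). Define V : ℝ×ℝ² → ℝ by V(x,y) = ‖y‖² − x². Then V is a Lyapunov function for the linear system on J×D: for every solution z of z'(t) = (A + B(t))z(t), and every t ∈ J with z(t) ∈ D, the derivative of the function s ↦ V(z(s)) at s = t is strictly negative. -/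
open Filter

set_option maxHeartbeats 1000000

/-- The constant matrix `A = diag(0, -a₂₂, -a₃₃)`. -/
noncomputable def Amat (a22 a33 : ℝ) : Matrix (Fin 3) (Fin 3) ℝ :=
  Matrix.diagonal ![0, -a22, -a33]

lemma cross_bound (u b v e : ℝ) (hb : |b| ≤ e) : u * b * v ≤ e * |u| * |v| := by
  calc u * b * v ≤ |u * b * v| := le_abs_self _
    _ = |b| * |u| * |v| := by rw [abs_mul, abs_mul]; ring
    _ ≤ e * |u| * |v| := by
        have : (0:ℝ) ≤ |u| * |v| := mul_nonneg (abs_nonneg _) (abs_nonneg _)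
        nlinarith [abs_nonneg b]

/-- **Lemma (Lyapunov function on the cone `‖y‖² ≥ x²`).**
Consider `z' = (A + B(t))z` on `ℝ × ℝ²` (coordinates `(x, y₁, y₂)`), where
`A = diag(0, -a₂₂, -a₃₃)` with `a₂₂, a₃₃ > 0` and the continuous matrix `B(t)` has entries
bounded by `c_b e^{-λ|t|}`.  Let `D = {‖y‖² ≥ x²} \ {0}` and let `t` satisfy
`6 c_b e^{-λ|t|} < min(a₂₂, a₃₃)`.  Then `V(x,y) = ‖y‖² - x²` is strictly decreasing along
any solution at such a time `t` with `z(t) ∈ D`. -/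
theorem lyapunov_cone (a22 a33 cb lam : ℝ)
    (ha22 : 0 < a22) (ha33 : 0 < a33) (hcb : 0 < cb) (hlam : 0 < lam)
    (B : ℝ → Matrix (Fin 3) (Fin 3) ℝ) (hBcont : Continuous B)
    (hBbound : ∀ t : ℝ, ∀ i j : Fin 3, |B t i j| ≤ cb * Real.exp (-lam * |t|))
    (z : ℝ → Fin 3 → ℝ)
    (hz : ∀ t : ℝ, HasDerivAt z ((Amat a22 a33 + B t).mulVec (z t)) t)
    (t : ℝ)
    (ht : 6 * cb * Real.exp (-lam * |t|) < min a22 a33)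
    (hzD : (z t 0) ^ 2 ≤ (z t 1) ^ 2 + (z t 2) ^ 2 ∧ z t ≠ 0) :
    deriv (fun s => (z s 1) ^ 2 + (z s 2) ^ 2 - (z s 0) ^ 2) t < 0 := by
  set ε := cb * Real.exp (-lam * |t|) with hεdef
  have hε : 0 < ε := mul_pos hcb (Real.exp_pos _)
  set w := (Amat a22 a33 + B t).mulVec (z t) with hwdef
  have hcomp := hasDerivAt_pi.mp (hz t)
  have hV : HasDerivAt (fun s => (z s 1) ^ 2 + (z s 2) ^ 2 - (z s 0) ^ 2)
      (2 * z t 1 * w 1 + 2 * z t 2 * w 2 - 2 * z t 0 * w 0) t := by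
    have h := (((hcomp 1).fun_pow 2).fun_add ((hcomp 2).fun_pow 2)).fun_sub ((hcomp 0).fun_pow 2)
    refine h.congr_deriv ?_
    norm_num
    ring
  rw [hV.deriv]
  -- compute components of w
  have hw0 : w 0 = B t 0 0 * z t 0 + B t 0 1 * z t 1 + B t 0 2 * z t 2 := by
    simp [hwdef, Amat, Matrix.add_mulVec, Matrix.mulVec_diagonal, Matrix.mulVec,
      dotProduct, Fin.sum_univ_three]
  have hw1 : w 1 = -a22 * z t 1 + (B t 1 0 * z t 0 + B t 1 1 * z t 1 + B t 1 2 * z t 2) := by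
    simp [hwdef, Amat, Matrix.add_mulVec, Matrix.mulVec_diagonal, Matrix.mulVec,
      dotProduct, Fin.sum_univ_three]
  have hw2 : w 2 = -a33 * z t 2 + (B t 2 0 * z t 0 + B t 2 1 * z t 1 + B t 2 2 * z t 2) := by
    simp [hwdef, Amat, Matrix.add_mulVec, Matrix.mulVec_diagonal, Matrix.mulVec,
      dotProduct, Fin.sum_univ_three]
  set x := z t 0
  set y1 := z t 1
  set y2 := z t 2
  -- y is nonzero
  have hy : 0 < y1 ^ 2 + y2 ^ 2 := by
    rcases lt_or_ge 0 (y1 ^ 2 + y2 ^ 2) with h | h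
    · exact h
    · exfalso
      have hy1 : y1 = 0 := by nlinarith [sq_nonneg y1, sq_nonneg y2]
      have hy2 : y2 = 0 := by nlinarith [sq_nonneg y1, sq_nonneg y2]
      have hx : x = 0 := by nlinarith [hzD.1, sq_nonneg x]
      apply hzD.2
      funext i
      fin_cases i <;> simpa using by assumption
  -- cross-term bounds
  have hb : ∀ i j : Fin 3, |B t i j| ≤ ε := fun i j => hBbound t i j
  have c10 := cross_bound y1 (B t 1 0) x ε (hb 1 0)
  have c11 := cross_bound y1 (B t 1 1) y1 ε (hb 1 1)
  have c12 := cross_bound y1 (B t 1 2) y2 ε (hb 1 2)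
  have c20 := cross_bound y2 (B t 2 0) x ε (hb 2 0)
  have c21 := cross_bound y2 (B t 2 1) y1 ε (hb 2 1)
  have c22 := cross_bound y2 (B t 2 2) y2 ε (hb 2 2)
  have c00 := cross_bound (-x) (B t 0 0) x ε (hb 0 0)
  have c01 := cross_bound (-x) (B t 0 1) y1 ε (hb 0 1)
  have c02 := cross_bound (-x) (B t 0 2) y2 ε (hb 0 2)
  rw [hw0, hw1, hw2]
  rw [abs_neg] at c00 c01 c02
  have hm1 : 6 * ε < a22 := lt_of_lt_of_le (by linarith [ht]) (min_le_left a22 a33)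
  have hm2 : 6 * ε < a33 := lt_of_lt_of_le (by linarith [ht]) (min_le_right a22 a33)
  have hax : x ^ 2 ≤ y1 ^ 2 + y2 ^ 2 := hzD.1
  have habs : |x| ^ 2 = x ^ 2 ∧ |y1| ^ 2 = y1 ^ 2 ∧ |y2| ^ 2 = y2 ^ 2 :=
    ⟨sq_abs x, sq_abs y1, sq_abs y2⟩
  obtain ⟨hax2, hay1, hay2⟩ := habs
  have h3 : (|x| + |y1| + |y2|) * (|x| + |y1| + |y2|) ≤ 3 * (x ^ 2 + y1 ^ 2 + y2 ^ 2) := by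
    nlinarith [sq_nonneg (|x| - |y1|), sq_nonneg (|x| - |y2|), sq_nonneg (|y1| - |y2|),
      sq_abs x, sq_abs y1, sq_abs y2]
  have hS : ε * ((|x| + |y1| + |y2|) * (|x| + |y1| + |y2|)) ≤ 6 * ε * (y1 ^ 2 + y2 ^ 2) :=
    calc ε * ((|x| + |y1| + |y2|) * (|x| + |y1| + |y2|))
        ≤ ε * (3 * (x ^ 2 + y1 ^ 2 + y2 ^ 2)) := mul_le_mul_of_nonneg_left h3 hε.le
      _ ≤ ε * (3 * ((y1 ^ 2 + y2 ^ 2) + y1 ^ 2 + y2 ^ 2)) :=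
          mul_le_mul_of_nonneg_left (by linarith) hε.le
      _ = 6 * ε * (y1 ^ 2 + y2 ^ 2) := by ring
  have hparen : y1 * B t 1 0 * x + y1 * B t 1 1 * y1 + y1 * B t 1 2 * y2
      + y2 * B t 2 0 * x + y2 * B t 2 1 * y1 + y2 * B t 2 2 * y2
      + (-x) * B t 0 0 * x + (-x) * B t 0 1 * y1 + (-x) * B t 0 2 * y2
      ≤ ε * ((|x| + |y1| + |y2|) * (|x| + |y1| + |y2|)) := by
    have : ε * |y1| * |x| + ε * |y1| * |y1| + ε * |y1| * |y2|
        + ε * |y2| * |x| + ε * |y2| * |y1| + ε * |y2| * |y2|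
        + ε * |x| * |x| + ε * |x| * |y1| + ε * |x| * |y2|
        = ε * ((|x| + |y1| + |y2|) * (|x| + |y1| + |y2|)) := by ring
    linarith [c10, c11, c12, c20, c21, c22, c00, c01, c02]
  have hmain : -2 * a22 * y1 ^ 2 - 2 * a33 * y2 ^ 2 + 2 * (6 * ε * (y1 ^ 2 + y2 ^ 2)) < 0 := by
    have ht' : 6 * ε < min a22 a33 := by rw [hεdef]; linarith
    nlinarith [mul_nonneg (sub_nonneg.mpr (min_le_left a22 a33)) (sq_nonneg y1),
      mul_nonneg (sub_nonneg.mpr (min_le_right a22 a33)) (sq_nonneg y2),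
      mul_pos (sub_pos.mpr ht') hy]
  nlinarith [hparen, hS, hmain]
end

section
/- Let x₀, ρ, r > 0 and let D = [x₀ − 2ρ, x₀ + 2ρ] × {y ∈ ℝ² : ‖y‖ ≥ r} ⊂ ℝ×ℝ². Let J be the set of all t ∈ ℝ such that 2·c_b·e^{−λ|t|}·(1 + (x₀ + 2ρ)/r) < min(a₂₂, a₃₃). Define V : ℝ×ℝ² → ℝ by V(x,y) = ‖y‖². Then V is a Lyapunov function for the linear system on J×D: for every solution z of z'(t) = (A + B(t))z(t), and every t ∈ J with z(t) ∈ D, the derivative of the function s ↦ V(z(s)) at s = t is strictly negative. -/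
open Filter

lemma trip_bound {a b c A C : ℝ} (ha : |a| ≤ A) (hc : |b| ≤ C) :
    a * b * c ≤ A * C * |c| := by
  calc a * b * c ≤ |a * b * c| := le_abs_self _
    _ = |a| * |b| * |c| := by rw [abs_mul, abs_mul]
    _ ≤ A * C * |c| := by
        have h0 : (0:ℝ) ≤ |c| := abs_nonneg _
        have h1 : |a| * |b| ≤ A * C :=
          mul_le_mul ha hc (abs_nonneg _) (le_trans (abs_nonneg _) ha)
        exact mul_le_mul_of_nonneg_right h1 h0

lemma pair_bound {a A : ℝ} (ha : |a| ≤ A) (b c : ℝ) :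
    a * b * c ≤ A * (|b| * |c|) := by
  calc a * b * c ≤ |a * b * c| := le_abs_self _
    _ = |a| * (|b| * |c|) := by rw [abs_mul, abs_mul, mul_assoc]
    _ ≤ A * (|b| * |c|) :=
        mul_le_mul_of_nonneg_right ha (mul_nonneg (abs_nonneg _) (abs_nonneg _))

set_option maxHeartbeats 1600000 in
/-- **Lemma (Lyapunov function on the strip `x ∈ [x₀-2ρ, x₀+2ρ]`, `‖y‖ ≥ r`).**
Consider `z' = (A + B(t))z` on `ℝ × ℝ²` (coordinates `(x, y₁, y₂)`), where
`A = diag(0, -a₂₂, -a₃₃)` with `a₂₂, a₃₃ > 0` and the continuous matrix `B(t)` has entries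
bounded by `c_b e^{-λ|t|}`.  Let `x₀, ρ, r > 0`,
`D = [x₀-2ρ, x₀+2ρ] × {‖y‖ ≥ r}`, and let `t` satisfy
`2 c_b e^{-λ|t|} (1 + (x₀+2ρ)/r) < min(a₂₂, a₃₃)`.  Then `V(x,y) = ‖y‖²` is strictly
decreasing along any solution at such a time `t` with `z(t) ∈ D`. -/
theorem lyapunov_strip (a22 a33 cb lam x0 ρ r : ℝ)
    (ha22 : 0 < a22) (ha33 : 0 < a33) (hcb : 0 < cb) (hlam : 0 < lam)
    (hx0 : 0 < x0) (hρ : 0 < ρ) (hr : 0 < r)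
    (B : ℝ → Matrix (Fin 3) (Fin 3) ℝ) (hBcont : Continuous B)
    (hBbound : ∀ t : ℝ, ∀ i j : Fin 3, |B t i j| ≤ cb * Real.exp (-lam * |t|))
    (z : ℝ → Fin 3 → ℝ)
    (hz : ∀ t : ℝ, HasDerivAt z ((Amat a22 a33 + B t).mulVec (z t)) t)
    (t : ℝ)
    (ht : 2 * cb * Real.exp (-lam * |t|) * (1 + (x0 + 2 * ρ) / r) < min a22 a33)
    (hzD : z t 0 ∈ Set.Icc (x0 - 2 * ρ) (x0 + 2 * ρ) ∧
           r ≤ Real.sqrt ((z t 1) ^ 2 + (z t 2) ^ 2)) :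
    deriv (fun s => (z s 1) ^ 2 + (z s 2) ^ 2) t < 0 := by
  obtain ⟨⟨hul, huu⟩, hsq⟩ := hzD
  set w : Fin 3 → ℝ := (Amat a22 a33 + B t).mulVec (z t) with hw
  have h1 : HasDerivAt (fun s => z s 1) (w 1) t := hasDerivAt_pi.mp (hz t) 1
  have h2 : HasDerivAt (fun s => z s 2) (w 2) t := hasDerivAt_pi.mp (hz t) 2
  have hD : HasDerivAt (fun s => (z s 1) ^ 2 + (z s 2) ^ 2)
      (2 * z t 1 * w 1 + 2 * z t 2 * w 2) t := by
    have := (h1.fun_pow 2).fun_add (h2.fun_pow 2)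
    refine this.congr_deriv ?_
    ring
  rw [hD.deriv]
  set u := z t 0
  set v1 := z t 1
  set v2 := z t 2
  have hw1 : w 1 = B t 1 0 * u + (-a22 + B t 1 1) * v1 + B t 1 2 * v2 := by
    simp [hw, Amat, Matrix.mulVec, dotProduct, Fin.sum_univ_three,
      Matrix.diagonal, Matrix.add_apply]
    rfl
  have hw2 : w 2 = B t 2 0 * u + B t 2 1 * v1 + (-a33 + B t 2 2) * v2 := by
    simp [hw, Amat, Matrix.mulVec, dotProduct, Fin.sum_univ_three,
      Matrix.diagonal, Matrix.add_apply]
    rfl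
  rw [hw1, hw2]
  set β := cb * Real.exp (-lam * |t|) with hβdef
  have hβ : 0 < β := mul_pos hcb (Real.exp_pos _)
  set X := x0 + 2 * ρ with hXdef
  have hX : 0 < X := by positivity
  have hu : |u| ≤ X := abs_le.mpr ⟨by linarith, huu⟩
  have hS : r ^ 2 ≤ v1 ^ 2 + v2 ^ 2 := by
    have h0 : (0:ℝ) ≤ v1 ^ 2 + v2 ^ 2 := by positivity
    nlinarith only [Real.sq_sqrt h0, Real.sqrt_nonneg (v1 ^ 2 + v2 ^ 2), hsq, hr]
  have h22 : 2 * β * (1 + X / r) < a22 := by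
    rw [hβdef, ← mul_assoc]; exact lt_of_lt_of_le ht (min_le_left _ _)
  have h33 : 2 * β * (1 + X / r) < a33 := by
    rw [hβdef, ← mul_assoc]; exact lt_of_lt_of_le ht (min_le_right _ _)
  have hdiv : X / r * r = X := div_mul_cancel₀ _ hr.ne'
  -- entry bounds
  have b10 := hBbound t 1 0
  have b11 := hBbound t 1 1
  have b12 := hBbound t 1 2
  have b20 := hBbound t 2 0
  have b21 := hBbound t 2 1
  have b22 := hBbound t 2 2
  set p1 := |v1| with hp1
  set p2 := |v2| with hp2
  have T1 : B t 1 0 * u * v1 ≤ β * X * p1 := trip_bound b10 hu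
  have T5 : B t 2 0 * u * v2 ≤ β * X * p2 := trip_bound b20 hu
  have T2 : B t 1 1 * v1 * v1 ≤ β * (p1 * p1) := pair_bound b11 v1 v1
  have T3 : B t 1 2 * v2 * v1 ≤ β * (p2 * p1) := pair_bound b12 v2 v1
  have T4 : B t 2 1 * v1 * v2 ≤ β * (p1 * p2) := pair_bound b21 v1 v2
  have T6 : B t 2 2 * v2 * v2 ≤ β * (p2 * p2) := pair_bound b22 v2 v2
  have hsq1 : p1 ^ 2 = v1 ^ 2 := sq_abs v1
  have hsq2 : p2 ^ 2 = v2 ^ 2 := sq_abs v2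
  have hp1n : 0 ≤ p1 := abs_nonneg _
  have hp2n : 0 ≤ p2 := abs_nonneg _
  have hsq1' : p1 * p1 = v1 ^ 2 := by rw [← sq]; exact sq_abs v1
  have hsq2' : p2 * p2 = v2 ^ 2 := by rw [← sq]; exact sq_abs v2
  have hE : B t 1 0 * u * v1 + B t 1 1 * v1 * v1 + B t 1 2 * v2 * v1
      + B t 2 0 * u * v2 + B t 2 1 * v1 * v2 + B t 2 2 * v2 * v2
      ≤ β * X * p1 + β * X * p2 + β * (v1 ^ 2) + β * (p2 * p1) + β * (p1 * p2)
        + β * (v2 ^ 2) := by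
    rw [← hsq1', ← hsq2']; linarith [T1, T2, T3, T4, T5, T6]
  have hcross : 2 * (p1 * p2) ≤ v1 ^ 2 + v2 ^ 2 := by
    nlinarith only [sq_nonneg (p1 - p2), hsq1, hsq2, hp1n, hp2n]
  have hsum : r * (p1 + p2) ≤ 2 * (v1 ^ 2 + v2 ^ 2) := by
    nlinarith only [sq_nonneg (p1 + p2 - r), hcross, hS, hsq1, hsq2, hp1n, hp2n, hr]
  have hSpos : 0 < v1 ^ 2 + v2 ^ 2 := lt_of_lt_of_le (by positivity) hS
  set m := min a22 a33 with hmdef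
  have hmin : 2 * β * r + 2 * β * X < m * r := by
    have hq : 2 * β * (1 + X / r) < m := by
      rw [hβdef, ← mul_assoc]; exact ht
    have h1 := mul_lt_mul_of_pos_right hq hr
    have h2 : 2 * β * (1 + X / r) * r = 2 * β * r + 2 * β * X := by
      field_simp
    calc 2 * β * r + 2 * β * X = 2 * β * (1 + X / r) * r := h2.symm
      _ < m * r := h1
  have H1 := mul_le_mul_of_nonneg_left hE (by positivity : (0:ℝ) ≤ 2 * r)
  have H2 := mul_le_mul_of_nonneg_left hsum
    (by positivity : (0:ℝ) ≤ 2 * β * X)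
  have H3 := mul_le_mul_of_nonneg_left hcross
    (by positivity : (0:ℝ) ≤ 2 * β * r)
  have H4 := mul_lt_mul_of_pos_right hmin hSpos
  have H5a : m * r * v1 ^ 2 ≤ a22 * r * v1 ^ 2 :=
    mul_le_mul_of_nonneg_right
      (mul_le_mul_of_nonneg_right (min_le_left a22 a33) hr.le) (sq_nonneg v1)
  have H5b : m * r * v2 ^ 2 ≤ a33 * r * v2 ^ 2 :=
    mul_le_mul_of_nonneg_right
      (mul_le_mul_of_nonneg_right (min_le_right a22 a33) hr.le) (sq_nonneg v2)
  have hkey : r * (2 * v1 * (B t 1 0 * u + (-a22 + B t 1 1) * v1 + B t 1 2 * v2)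
      + 2 * v2 * (B t 2 0 * u + B t 2 1 * v1 + (-a33 + B t 2 2) * v2)) < 0 := by
    nlinarith only [H1, H2, H3, H4, H5a, H5b]
  by_contra hcon
  push_neg at hcon
  have h := mul_nonneg hr.le hcon
  linarith only [hkey, h]
end

section
/- Fix x** > 0, ρ > 0, r > 0 and t** > 0 such that 6·c_b·e^{−λ·t**} < min(a₂₂, a₃₃), 2·c_b·e^{−λ·t**}·(1 + (x** + 2ρ)/r) < min(a₂₂, a₃₃), and (1/λ)·c_b·e^{−λ·t**}·(x** + 2ρ + 2r) < ρ. Then for every point p** ∈ {x**} × B̄(0,r), the solution γ of γ'(t) = (A + B(t))γ(t) with γ(t**) = p** converges as t → +∞, and its limit has the form (x₊**, 0, 0) with x₊** ∈ [x** − ρ, x** + ρ]. -/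
open Filter
open Set MeasureTheory Topology

lemma integral_exp_neg_mul' {lam : ℝ} (hlam : 0 < lam) (a b : ℝ) :
    ∫ s in a..b, Real.exp (-lam * s) =
      (Real.exp (-lam * a) - Real.exp (-lam * b)) / lam := by
  have h : ∀ s ∈ Set.uIcc a b, HasDerivAt (fun u => -Real.exp (-lam * u) / lam)
      (Real.exp (-lam * s)) s := by
    intro s _
    have h1 : HasDerivAt (fun u => -lam * u) (-lam) s := by
      simpa using (hasDerivAt_id s).const_mul (-lam)
    have h2 := (Real.hasDerivAt_exp (-lam * s)).comp s h1
    have h3 := (h2.neg).div_const lam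
    refine h3.congr_deriv ?_
    field_simp
  have hint : IntervalIntegrable (fun s => Real.exp (-lam * s)) volume a b :=
    (Real.continuous_exp.comp (continuous_const.mul continuous_id)).intervalIntegrable a b
  rw [intervalIntegral.integral_eq_sub_of_hasDerivAt h hint]
  ring

lemma eventually_lt_right_of_hasDerivAt_neg {f : ℝ → ℝ} {x f' : ℝ}
    (h : HasDerivAt f f' x) (hneg : f' < 0) : ∀ᶠ t in 𝓝[>] x, f t < f x := by
  have hs : Tendsto (slope f x) (𝓝[≠] x) (𝓝 f') := hasDerivAt_iff_tendsto_slope.1 h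
  have hs' : ∀ᶠ t in 𝓝[≠] x, slope f x t < 0 :=
    hs.eventually (Filter.eventually_iff_exists_mem.2 ⟨Set.Iio 0, Iio_mem_nhds hneg, fun y hy => hy⟩)
  have hmono : 𝓝[>] x ≤ 𝓝[≠] x := nhdsWithin_mono x fun y hy => ne_of_gt hy
  filter_upwards [hmono hs', self_mem_nhdsWithin] with t ht ht'
  have hx : 0 < t - x := sub_pos.2 ht'
  have := ht
  rw [slope_def_field] at this
  have h2 : f t - f x < 0 := by
    by_contra hge
    exact absurd this (not_lt.2 (div_nonneg (not_lt.1 hge) hx.le))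
  linarith

lemma forward_invariance {G : ℝ → Prop} {a : ℝ}
    (h0 : G a)
    (hclosed : ∀ T, a < T → (∀ t ∈ Ico a T, G t) → G T)
    (hopen : ∀ T, a ≤ T → (∀ t ∈ Icc a T, G t) → ∀ᶠ t in 𝓝[>] T, G t) :
    ∀ t, a ≤ t → G t := by
  by_contra hc
  push_neg at hc
  obtain ⟨t₀, ht₀a, ht₀⟩ := hc
  set Sc : Set ℝ := {T | a ≤ T ∧ ¬ G T} with hScdef
  have hne : Sc.Nonempty := ⟨t₀, ht₀a, ht₀⟩
  have hbdd : BddBelow Sc := ⟨a, fun c hc => hc.1⟩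
  set T := sInf Sc with hT
  have haT : a ≤ T := le_csInf hne fun c hc => hc.1
  have hIco : ∀ t ∈ Ico a T, G t := by
    intro t ⟨hta, htT⟩
    by_contra hGt
    exact absurd (csInf_le hbdd ⟨hta, hGt⟩) (not_le.2 htT)
  have hGT : G T := by
    rcases eq_or_lt_of_le haT with h | h
    · exact h ▸ h0
    · exact hclosed T h hIco
  have hIcc : ∀ t ∈ Icc a T, G t := by
    intro t ⟨hta, htT⟩
    rcases eq_or_lt_of_le htT with h | h
    · exact h ▸ hGT
    · exact hIco t ⟨hta, h⟩
  obtain ⟨u, hu, hsub⟩ := mem_nhdsGT_iff_exists_Ioo_subset.1 (hopen T haT hIcc)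
  obtain ⟨c, hcSc, hcu⟩ := (csInf_lt_iff hbdd hne).1 (show sInf Sc < u from hT ▸ hu)
  have hTc : T ≤ c := csInf_le hbdd hcSc
  rcases eq_or_lt_of_le hTc with h | h
  · exact hcSc.2 (h ▸ hGT)
  · exact hcSc.2 (hsub ⟨h, hcu⟩)

set_option maxHeartbeats 2000000 in
lemma scalar_forward_convergence (a22 a33 cb lam xss ρ r tss : ℝ)
    (ha22 : 0 < a22) (ha33 : 0 < a33) (hcb : 0 < cb) (hlam : 0 < lam)
    (hxss : 0 < xss) (hρ : 0 < ρ) (hr : 0 < r) (htss : 0 < tss)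
    (hcond1 : 6 * cb * Real.exp (-lam * tss) < min a22 a33)
    (hcond2 : 2 * cb * Real.exp (-lam * tss) * (1 + (xss + 2 * ρ) / r) < min a22 a33)
    (hcond3 : (1 / lam) * cb * Real.exp (-lam * tss) * (xss + 2 * ρ + 2 * r) < ρ)
    (x y1 y2 q0 q1 q2 : ℝ → ℝ)
    (hq0c : Continuous q0)
    (hx : ∀ t, HasDerivAt x (q0 t) t)
    (hy1 : ∀ t, HasDerivAt y1 (-(a22 * y1 t) + q1 t) t)
    (hy2 : ∀ t, HasDerivAt y2 (-(a33 * y2 t) + q2 t) t)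
    (hq0b : ∀ t, tss ≤ t → |q0 t| ≤ cb * Real.exp (-lam * t) * (|x t| + |y1 t| + |y2 t|))
    (hq1b : ∀ t, tss ≤ t → |q1 t| ≤ cb * Real.exp (-lam * t) * (|x t| + |y1 t| + |y2 t|))
    (hq2b : ∀ t, tss ≤ t → |q2 t| ≤ cb * Real.exp (-lam * t) * (|x t| + |y1 t| + |y2 t|))
    (hx0 : x tss = xss) (hy0 : y1 tss ^ 2 + y2 tss ^ 2 ≤ r ^ 2) :
    ∃ xp ∈ Set.Icc (xss - ρ) (xss + ρ),
      Tendsto x atTop (nhds xp) ∧ Tendsto y1 atTop (nhds 0) ∧ Tendsto y2 atTop (nhds 0) := by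
  have hm : 0 < min a22 a33 := lt_min ha22 ha33
  have hεle : ∀ t, tss ≤ t → cb * Real.exp (-lam * t) ≤ cb * Real.exp (-lam * tss) := by
    intro t ht
    have h := Real.exp_le_exp.2 (show -lam * t ≤ -lam * tss by nlinarith)
    nlinarith
  have hxc : Continuous x := continuous_iff_continuousAt.2 fun t => (hx t).continuousAt
  have hy1c : Continuous y1 := continuous_iff_continuousAt.2 fun t => (hy1 t).continuousAt
  have hy2c : Continuous y2 := continuous_iff_continuousAt.2 fun t => (hy2 t).continuousAt
  set g : ℝ → ℝ := fun t => y1 t ^ 2 + y2 t ^ 2 with hgdef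
  have hgc : Continuous g := (hy1c.pow 2).add (hy2c.pow 2)
  have hg0 : ∀ t, 0 ≤ g t := fun t => by positivity
  have hgD : ∀ t, HasDerivAt g
      (2 * y1 t * (-(a22 * y1 t) + q1 t) + 2 * y2 t * (-(a33 * y2 t) + q2 t)) t := by
    intro t
    have h := ((hy1 t).pow 2).add ((hy2 t).pow 2)
    refine h.congr_deriv ?_
    ring
  have habs : ∀ t, g t ≤ r ^ 2 → |y1 t| ≤ r ∧ |y2 t| ≤ r := by
    intro t h
    simp only [hgdef] at h
    constructor
    · nlinarith [sq_abs (y1 t), abs_nonneg (y1 t), sq_nonneg (y2 t), hr]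
    · nlinarith [sq_abs (y2 t), abs_nonneg (y2 t), sq_nonneg (y1 t), hr]
  have hxabs : ∀ t, |x t - xss| ≤ ρ → |x t| ≤ xss + ρ := by
    intro t h
    have h1 := abs_le.1 h
    exact abs_le.2 ⟨by linarith, by linarith⟩
  -- general derivative estimate for g
  have hE1 : ∀ t, tss ≤ t → |x t - xss| ≤ ρ → g t ≤ r ^ 2 →
      2 * y1 t * (-(a22 * y1 t) + q1 t) + 2 * y2 t * (-(a33 * y2 t) + q2 t)
        ≤ -(2 * min a22 a33) * g t + 2 * (cb * Real.exp (-lam * t)) *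
            ((|y1 t| + |y2 t|) * (xss + ρ) + (|y1 t| + |y2 t|) ^ 2) := by
    intro t ht hxb hgb
    have hε : (0:ℝ) ≤ cb * Real.exp (-lam * t) := by positivity
    have hX := hxabs t hxb
    have h1 : y1 t * q1 t ≤ |y1 t| * (cb * Real.exp (-lam * t) * (|x t| + |y1 t| + |y2 t|)) := by
      calc y1 t * q1 t ≤ |y1 t * q1 t| := le_abs_self _
      _ = |y1 t| * |q1 t| := abs_mul _ _
      _ ≤ _ := mul_le_mul_of_nonneg_left (hq1b t ht) (abs_nonneg _)
    have h2 : y2 t * q2 t ≤ |y2 t| * (cb * Real.exp (-lam * t) * (|x t| + |y1 t| + |y2 t|)) := by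
      calc y2 t * q2 t ≤ |y2 t * q2 t| := le_abs_self _
      _ = |y2 t| * |q2 t| := abs_mul _ _
      _ ≤ _ := mul_le_mul_of_nonneg_left (hq2b t ht) (abs_nonneg _)
    have hm1 : min a22 a33 ≤ a22 := min_le_left _ _
    have hm2 : min a22 a33 ≤ a33 := min_le_right _ _
    have hA := abs_nonneg (y1 t)
    have hB := abs_nonneg (y2 t)
    have hsum : y1 t * q1 t + y2 t * q2 t ≤
        (|y1 t| + |y2 t|) * (cb * Real.exp (-lam * t) * (|x t| + |y1 t| + |y2 t|)) := by
      have h12 := add_le_add h1 h2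
      linarith [h12]
    have hstep2 : (|y1 t| + |y2 t|) * (cb * Real.exp (-lam * t) * (|x t| + |y1 t| + |y2 t|))
        ≤ (|y1 t| + |y2 t|) * (cb * Real.exp (-lam * t) * ((xss + ρ) + |y1 t| + |y2 t|)) := by
      apply mul_le_mul_of_nonneg_left _ (add_nonneg hA hB)
      apply mul_le_mul_of_nonneg_left _ hε
      linarith [hX]
    have hstep3 : min a22 a33 * y1 t ^ 2 ≤ a22 * y1 t ^ 2 :=
      mul_le_mul_of_nonneg_right hm1 (sq_nonneg _)
    have hstep4 : min a22 a33 * y2 t ^ 2 ≤ a33 * y2 t ^ 2 :=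
      mul_le_mul_of_nonneg_right hm2 (sq_nonneg _)
    simp only [hgdef]
    nlinarith [hsum, hstep2, hstep3, hstep4]
  -- strict negativity at the boundary g = r^2
  have hbdry : ∀ t, tss ≤ t → |x t - xss| ≤ ρ → g t = r ^ 2 →
      2 * y1 t * (-(a22 * y1 t) + q1 t) + 2 * y2 t * (-(a33 * y2 t) + q2 t) < 0 := by
    intro t ht hxb hgb
    have hE := hE1 t ht hxb hgb.le
    obtain ⟨hA, hB⟩ := habs t hgb.le
    have hεt := hεle t ht
    have hε : (0:ℝ) ≤ cb * Real.exp (-lam * t) := by positivity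
    have hε₀ : (0:ℝ) < cb * Real.exp (-lam * tss) := by positivity
    have hgb' : y1 t ^ 2 + y2 t ^ 2 = r ^ 2 := by
      have := hgb
      simp only [hgdef] at this
      exact this
    have hAB2 : (|y1 t| + |y2 t|) ^ 2 ≤ 2 * r ^ 2 := by
      nlinarith [sq_nonneg (|y1 t| - |y2 t|), sq_abs (y1 t), sq_abs (y2 t), hgb']
    have hAB : |y1 t| + |y2 t| ≤ 2 * r := by
      linarith [abs_nonneg (y1 t), abs_nonneg (y2 t)]
    -- the key budget from hcond2 (multiplied by r^2 > 0)
    have hbud : 2 * (cb * Real.exp (-lam * tss)) * (r ^ 2 + r * (xss + 2 * ρ))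
        < min a22 a33 * r ^ 2 := by
      have h := hcond2
      have hrr : 0 < r ^ 2 := by positivity
      have h2 : 2 * cb * Real.exp (-lam * tss) * (1 + (xss + 2 * ρ) / r) * r ^ 2
          < min a22 a33 * r ^ 2 := by nlinarith
      calc 2 * (cb * Real.exp (-lam * tss)) * (r ^ 2 + r * (xss + 2 * ρ))
          = 2 * cb * Real.exp (-lam * tss) * (1 + (xss + 2 * ρ) / r) * r ^ 2 := by
            field_simp
      _ < min a22 a33 * r ^ 2 := h2
    have hchain : 2 * (cb * Real.exp (-lam * t)) *
        ((|y1 t| + |y2 t|) * (xss + ρ) + (|y1 t| + |y2 t|) ^ 2)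
        ≤ 2 * (cb * Real.exp (-lam * tss)) * (2 * r * (xss + ρ) + 2 * r ^ 2) := by
      have hfac : (|y1 t| + |y2 t|) * (xss + ρ) + (|y1 t| + |y2 t|) ^ 2
          ≤ 2 * r * (xss + ρ) + 2 * r ^ 2 := by
        have : (|y1 t| + |y2 t|) * (xss + ρ) ≤ 2 * r * (xss + ρ) :=
          mul_le_mul_of_nonneg_right hAB (by positivity)
        linarith
      have hpos : (0:ℝ) ≤ 2 * r * (xss + ρ) + 2 * r ^ 2 := by positivity
      nlinarith [mul_le_mul hεt hfac (by positivity) hε₀.le]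
    have hmg : min a22 a33 * g t = min a22 a33 * r ^ 2 := by rw [hgb]
    nlinarith [hE, hchain, hbud, hmg, mul_nonneg (mul_nonneg hε₀.le hr.le) hρ.le]
  -- decay estimate for g
  have hdecay : ∀ t, tss ≤ t → |x t - xss| ≤ ρ → g t ≤ r ^ 2 →
      2 * y1 t * (-(a22 * y1 t) + q1 t) + 2 * y2 t * (-(a33 * y2 t) + q2 t)
        ≤ -(min a22 a33) * g t + (4 * r * (xss + ρ) * cb) * Real.exp (-lam * t) := by
    intro t ht hxb hgb
    have hE := hE1 t ht hxb hgb
    obtain ⟨hA, hB⟩ := habs t hgb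
    have hεt := hεle t ht
    have hε : (0:ℝ) ≤ cb * Real.exp (-lam * t) := by positivity
    have hAB : |y1 t| + |y2 t| ≤ 2 * r := by
      linarith [abs_nonneg (y1 t), abs_nonneg (y2 t)]
    have hAB2 : (|y1 t| + |y2 t|) ^ 2 ≤ 2 * g t := by
      simp only [hgdef]
      nlinarith [sq_nonneg (|y1 t| - |y2 t|), sq_abs (y1 t), sq_abs (y2 t)]
    have h4ε : 4 * (cb * Real.exp (-lam * t)) ≤ min a22 a33 := by
      have := hεle t ht
      linarith [hcond1]
    have h1 : 2 * (cb * Real.exp (-lam * t)) * ((|y1 t| + |y2 t|) ^ 2)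
        ≤ min a22 a33 * g t := by
      nlinarith [mul_le_mul_of_nonneg_left hAB2 hε, mul_nonneg hε (hg0 t),
        mul_nonneg (sub_nonneg.2 h4ε) (hg0 t)]
    have h2 : 2 * (cb * Real.exp (-lam * t)) * ((|y1 t| + |y2 t|) * (xss + ρ))
        ≤ (4 * r * (xss + ρ) * cb) * Real.exp (-lam * t) := by
      have := mul_le_mul_of_nonneg_right hAB (show (0:ℝ) ≤ xss + ρ by positivity)
      nlinarith [hε]
    nlinarith [hE, h1, h2]
  -- FTC identity for x
  have hFTC : ∀ T, tss ≤ T → x T - xss = ∫ s in tss..T, q0 s := by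
    intro T hT
    rw [intervalIntegral.integral_eq_sub_of_hasDerivAt (fun s _ => hx s)
      (hq0c.intervalIntegrable _ _), hx0]
  -- bound on |x T - xss| assuming bounds on [tss, T]
  have hxbound : ∀ T, tss ≤ T → (∀ s ∈ Icc tss T, |x s - xss| ≤ ρ ∧ g s ≤ r ^ 2) →
      |x T - xss| ≤ 1 / lam * cb * Real.exp (-lam * tss) * (xss + 2 * ρ + 2 * r) := by
    intro T hT hIb
    have hq0bd : ∀ s ∈ Icc tss T, |q0 s| ≤ cb * (xss + 2 * ρ + 2 * r) * Real.exp (-lam * s) := by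
      intro s hs
      have h := hq0b s hs.1
      have hxs := hxabs s (hIb s hs).1
      obtain ⟨hA, hB⟩ := habs s (hIb s hs).2
      have hε : (0:ℝ) ≤ cb * Real.exp (-lam * s) := by positivity
      calc |q0 s| ≤ cb * Real.exp (-lam * s) * (|x s| + |y1 s| + |y2 s|) := h
      _ ≤ cb * Real.exp (-lam * s) * ((xss + ρ) + r + r) := by
          apply mul_le_mul_of_nonneg_left _ hε
          linarith
      _ ≤ cb * (xss + 2 * ρ + 2 * r) * Real.exp (-lam * s) := by
          nlinarith [Real.exp_pos (-lam * s), hε]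
    rw [hFTC T hT]
    have hcont : Continuous fun s => cb * (xss + 2 * ρ + 2 * r) * Real.exp (-lam * s) := by
      continuity
    calc |∫ s in tss..T, q0 s| ≤ ∫ s in tss..T, |q0 s| :=
        intervalIntegral.abs_integral_le_integral_abs hT
    _ ≤ ∫ s in tss..T, cb * (xss + 2 * ρ + 2 * r) * Real.exp (-lam * s) :=
        intervalIntegral.integral_mono_on hT (hq0c.abs.intervalIntegrable _ _)
          (hcont.intervalIntegrable _ _) hq0bd
    _ = cb * (xss + 2 * ρ + 2 * r) *
          ((Real.exp (-lam * tss) - Real.exp (-lam * T)) / lam) := by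
        rw [intervalIntegral.integral_const_mul, integral_exp_neg_mul' hlam]
    _ ≤ 1 / lam * cb * Real.exp (-lam * tss) * (xss + 2 * ρ + 2 * r) := by
        have h1 : (Real.exp (-lam * tss) - Real.exp (-lam * T)) / lam
            ≤ Real.exp (-lam * tss) / lam := by
          gcongr
          linarith [Real.exp_pos (-lam * T)]
        have hC : (0:ℝ) ≤ cb * (xss + 2 * ρ + 2 * r) := by positivity
        calc cb * (xss + 2 * ρ + 2 * r) *
              ((Real.exp (-lam * tss) - Real.exp (-lam * T)) / lam)
            ≤ cb * (xss + 2 * ρ + 2 * r) * (Real.exp (-lam * tss) / lam) :=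
              mul_le_mul_of_nonneg_left h1 hC
        _ = 1 / lam * cb * Real.exp (-lam * tss) * (xss + 2 * ρ + 2 * r) := by
            field_simp
  -- the invariance region
  have hinv : ∀ t, tss ≤ t → |x t - xss| ≤ ρ ∧ g t ≤ r ^ 2 := by
    apply forward_invariance
    · refine ⟨by simp [hx0, hρ.le], ?_⟩
      simpa [hgdef] using hy0
    · intro T hT hIco
      have hmem : Ico tss T ∈ 𝓝[<] T := by
        have h1 : Ici tss ∈ 𝓝 T := Ici_mem_nhds hT
        have h2 : Ici tss ∩ Iio T ∈ 𝓝[<] T :=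
          inter_mem (mem_nhdsWithin_of_mem_nhds h1) self_mem_nhdsWithin
        rwa [Set.Ici_inter_Iio] at h2
      constructor
      · refine le_of_tendsto
          ((((hxc.sub continuous_const).abs).continuousAt.tendsto).mono_left
            (nhdsWithin_le_nhds : 𝓝[<] T ≤ 𝓝 T)) ?_
        filter_upwards [hmem] with s hs using (hIco s hs).1
      · refine le_of_tendsto
          ((hgc.continuousAt.tendsto).mono_left (nhdsWithin_le_nhds : 𝓝[<] T ≤ 𝓝 T)) ?_
        filter_upwards [hmem] with s hs using (hIco s hs).2
    · intro T hT hIcc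
      have hxT : |x T - xss| < ρ := lt_of_le_of_lt (hxbound T hT hIcc) hcond3
      have hxev : ∀ᶠ t in 𝓝[>] T, |x t - xss| ≤ ρ := by
        have hcont : ContinuousAt (fun t => |x t - xss|) T :=
          ((hxc.sub continuous_const).abs).continuousAt
        have h2 : ∀ᶠ t in 𝓝 T, |x t - xss| < ρ := hcont.eventually_lt_const hxT
        exact (h2.filter_mono nhdsWithin_le_nhds).mono fun t ht => ht.le
      have hgev : ∀ᶠ t in 𝓝[>] T, g t ≤ r ^ 2 := by
        rcases lt_or_eq_of_le (hIcc T ⟨hT, le_refl T⟩).2 with hlt | heqq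
        · have h2 : ∀ᶠ t in 𝓝 T, g t < r ^ 2 := hgc.continuousAt.eventually_lt_const hlt
          exact (h2.filter_mono nhdsWithin_le_nhds).mono fun t ht => ht.le
        · have hneg := hbdry T hT (hIcc T ⟨hT, le_refl T⟩).1 heqq
          have hev := eventually_lt_right_of_hasDerivAt_neg (hgD T) hneg
          exact hev.mono fun t ht => heqq ▸ ht.le
      exact hxev.and hgev
  -- decay of g to zero
  set K : ℝ := 4 * r * (xss + ρ) * cb with hKdef
  have hK0 : 0 < K := by positivity
  set ν : ℝ := min (min a22 a33) lam / 2 with hνdef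
  have hν0 : 0 < ν := by positivity
  have hνm : ν ≤ min a22 a33 := by
    have := min_le_left (min a22 a33) lam
    simp only [hνdef]
    linarith
  have hνlam : ν ≤ lam := by
    have := min_le_right (min a22 a33) lam
    simp only [hνdef]
    linarith
  have hFD : ∀ t, HasDerivAt (fun u => K * u - Real.exp (ν * u) * g u)
      (K - (Real.exp (ν * t) * ν * g t +
        Real.exp (ν * t) * (2 * y1 t * (-(a22 * y1 t) + q1 t) +
          2 * y2 t * (-(a33 * y2 t) + q2 t)))) t := by
    intro t
    have h1 : HasDerivAt (fun u => Real.exp (ν * u)) (Real.exp (ν * t) * ν) t := by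
      simpa [Function.comp_def] using (Real.hasDerivAt_exp (ν * t)).comp t ((hasDerivAt_id t).const_mul ν)
    have h2 := h1.mul (hgD t)
    have h3 := ((hasDerivAt_id t).const_mul K).sub h2
    refine h3.congr_deriv ?_
    ring
  have hmonoF : MonotoneOn (fun u => K * u - Real.exp (ν * u) * g u) (Ici tss) := by
    apply monotoneOn_of_deriv_nonneg (convex_Ici tss)
    · exact ((continuous_const.mul continuous_id).sub
        ((Real.continuous_exp.comp (continuous_const.mul continuous_id)).mul hgc)).continuousOn
    · intro t ht
      exact (hFD t).differentiableAt.differentiableWithinAt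
    · intro t ht
      rw [interior_Ici] at ht
      rw [(hFD t).deriv]
      have hin := hinv t (le_of_lt ht)
      have hd := hdecay t (le_of_lt ht) hin.1 hin.2
      have hexp1 : Real.exp (ν * t) * Real.exp (-lam * t) ≤ 1 := by
        rw [← Real.exp_add]
        apply Real.exp_le_one_iff.2
        nlinarith [lt_of_lt_of_le htss (le_of_lt ht)]
      have h5 := mul_le_mul_of_nonneg_left hd (Real.exp_pos (ν * t)).le
      nlinarith [h5, hexp1, hg0 t, Real.exp_pos (ν * t),
        mul_nonneg (mul_nonneg (sub_nonneg.2 hνm) (hg0 t)) (Real.exp_pos (ν * t)).le,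
        mul_le_mul_of_nonneg_left hexp1 hK0.le]
  have hgle : ∀ t, tss ≤ t →
      g t ≤ (Real.exp (ν * tss) * g tss + K * (t - tss)) * Real.exp (-(ν * t)) := by
    intro t ht
    have h := hmonoF (self_mem_Ici) ht ht
    have h2 : Real.exp (ν * t) * g t ≤ Real.exp (ν * tss) * g tss + K * (t - tss) := by
      simp only at h
      linarith
    have h3 : Real.exp (-(ν * t)) * (Real.exp (ν * t) * g t) = g t := by
      rw [← mul_assoc, ← Real.exp_add]
      simp
    calc g t = Real.exp (-(ν * t)) * (Real.exp (ν * t) * g t) := h3.symm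
    _ ≤ Real.exp (-(ν * t)) * (Real.exp (ν * tss) * g tss + K * (t - tss)) :=
        mul_le_mul_of_nonneg_left h2 (Real.exp_pos _).le
    _ = (Real.exp (ν * tss) * g tss + K * (t - tss)) * Real.exp (-(ν * t)) := by ring
  have hblim : Tendsto (fun t => (Real.exp (ν * tss) * g tss + K * (t - tss)) *
      Real.exp (-(ν * t))) atTop (𝓝 0) := by
    have h1 : Tendsto (fun t : ℝ => ν * t) atTop atTop :=
      Tendsto.const_mul_atTop hν0 tendsto_id
    have h2 : Tendsto (fun t => Real.exp (-(ν * t))) atTop (𝓝 0) := by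
      have := Real.tendsto_exp_neg_atTop_nhds_zero.comp h1
      exact this
    have h3 : Tendsto (fun t => (ν * t) * Real.exp (-(ν * t))) atTop (𝓝 0) := by
      have := (Real.tendsto_pow_mul_exp_neg_atTop_nhds_zero 1).comp h1
      simpa [Function.comp_def] using this
    have h4 : Tendsto (fun t => t * Real.exp (-(ν * t))) atTop (𝓝 0) := by
      have h5 := h3.const_mul (1 / ν)
      rw [mul_zero] at h5
      apply h5.congr
      intro t
      field_simp
    have h6 := (h4.const_mul K).add (h2.const_mul (Real.exp (ν * tss) * g tss - K * tss))
    simp only [mul_zero, add_zero, zero_add] at h6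
    apply h6.congr
    intro t
    ring
  have hgtends : Tendsto g atTop (𝓝 0) := by
    apply squeeze_zero' (Filter.Eventually.of_forall hg0)
      _ hblim
    filter_upwards [eventually_ge_atTop tss] with t ht using hgle t ht
  have hsq : Tendsto (fun t => Real.sqrt (g t)) atTop (𝓝 0) := by
    have := (Real.continuous_sqrt.tendsto 0).comp hgtends
    simpa [Function.comp_def] using this
  have hy1t : Tendsto y1 atTop (𝓝 0) := by
    have h0 : Tendsto (fun t => -Real.sqrt (g t)) atTop (𝓝 0) := by
      simpa using hsq.neg
    apply tendsto_of_tendsto_of_tendsto_of_le_of_le' h0 hsq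
    · apply Filter.Eventually.of_forall
      intro t
      have : |y1 t| ≤ Real.sqrt (g t) := by
        apply Real.abs_le_sqrt
        simp only [hgdef]
        nlinarith [sq_nonneg (y2 t)]
      linarith [(abs_le.1 this).1]
    · apply Filter.Eventually.of_forall
      intro t
      have : |y1 t| ≤ Real.sqrt (g t) := by
        apply Real.abs_le_sqrt
        simp only [hgdef]
        nlinarith [sq_nonneg (y2 t)]
      linarith [(abs_le.1 this).2]
  have hy2t : Tendsto y2 atTop (𝓝 0) := by
    have h0 : Tendsto (fun t => -Real.sqrt (g t)) atTop (𝓝 0) := by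
      simpa using hsq.neg
    apply tendsto_of_tendsto_of_tendsto_of_le_of_le' h0 hsq
    · apply Filter.Eventually.of_forall
      intro t
      have : |y2 t| ≤ Real.sqrt (g t) := by
        apply Real.abs_le_sqrt
        simp only [hgdef]
        nlinarith [sq_nonneg (y1 t)]
      linarith [(abs_le.1 this).1]
    · apply Filter.Eventually.of_forall
      intro t
      have : |y2 t| ≤ Real.sqrt (g t) := by
        apply Real.abs_le_sqrt
        simp only [hgdef]
        nlinarith [sq_nonneg (y1 t)]
      linarith [(abs_le.1 this).2]
  -- convergence of x
  have hq0glob : ∀ s, tss ≤ s →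
      |q0 s| ≤ cb * (xss + 2 * ρ + 2 * r) * Real.exp (-lam * s) := by
    intro s hs
    have h := hq0b s hs
    have hxs := hxabs s (hinv s hs).1
    obtain ⟨hA, hB⟩ := habs s (hinv s hs).2
    have hε : (0:ℝ) ≤ cb * Real.exp (-lam * s) := by positivity
    calc |q0 s| ≤ cb * Real.exp (-lam * s) * (|x s| + |y1 s| + |y2 s|) := h
    _ ≤ cb * Real.exp (-lam * s) * ((xss + ρ) + r + r) := by
        apply mul_le_mul_of_nonneg_left _ hε
        linarith
    _ ≤ cb * (xss + 2 * ρ + 2 * r) * Real.exp (-lam * s) := by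
        nlinarith [Real.exp_pos (-lam * s), hε]
  have hq0int : IntegrableOn q0 (Ioi tss) := by
    apply Integrable.mono' (((exp_neg_integrableOn_Ioi tss hlam)).const_mul
      (cb * (xss + 2 * ρ + 2 * r)))
    · exact hq0c.aestronglyMeasurable.restrict
    · rw [ae_restrict_iff' measurableSet_Ioi]
      apply Filter.Eventually.of_forall
      intro s hs
      rw [Real.norm_eq_abs]
      exact hq0glob s (le_of_lt hs)
  have htendI := intervalIntegral_tendsto_integral_Ioi tss hq0int tendsto_id
  have hxt : Tendsto x atTop (𝓝 (xss + ∫ s in Ioi tss, q0 s)) := by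
    have h := htendI.const_add xss
    apply h.congr'
    filter_upwards [eventually_ge_atTop tss] with t ht
    have := hFTC t ht
    simp only [id]
    linarith
  have hxpb : |(xss + ∫ s in Ioi tss, q0 s) - xss| ≤ ρ := by
    have h1 : Tendsto (fun t => |x t - xss|) atTop
        (𝓝 |(xss + ∫ s in Ioi tss, q0 s) - xss|) := (hxt.sub_const xss).abs
    apply le_of_tendsto h1
    filter_upwards [eventually_ge_atTop tss] with t ht
    exact (hxbound t ht fun s hs => hinv s hs.1).trans hcond3.le
  refine ⟨xss + ∫ s in Ioi tss, q0 s, ?_, hxt, hy1t, hy2t⟩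
  have h2 := abs_le.1 hxpb
  exact ⟨by linarith [h2.1], by linarith [h2.2]⟩



/-- `γ` solves `γ' = (A + B(t))γ` on all of `ℝ`. -/
def IsLinSolution (a22 a33 : ℝ) (B : ℝ → Matrix (Fin 3) (Fin 3) ℝ)
    (γ : ℝ → Fin 3 → ℝ) : Prop :=
  ∀ t : ℝ, HasDerivAt γ ((Amat a22 a33 + B t).mulVec (γ t)) t

/-- **Lemma (forward convergence).**
Consider `γ' = (A + B(t))γ` on `ℝ × ℝ²`, `A = diag(0, -a₂₂, -a₃₃)` with `a₂₂, a₃₃ > 0`,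
`B` continuous with `|b_ij(t)| ≤ c_b e^{-λ|t|}`.  Fix `x** > 0`, `ρ > 0`, `r > 0`,
`t** > 0` satisfying `6 c_b e^{-λt**} < min(a₂₂,a₃₃)`,
`2 c_b e^{-λt**}(1 + (x**+2ρ)/r) < min(a₂₂,a₃₃)` and
`(1/λ) c_b e^{-λt**}(x** + 2ρ + 2r) < ρ`.  Then for every `p** ∈ {x**} × B̄(0,r)`, the
solution through `(t**, p**)` converges as `t → +∞`, with limit `(x₊**, 0, 0)`,
`x₊** ∈ [x** - ρ, x** + ρ]`. -/
theorem forward_convergence (a22 a33 cb lam xss ρ r tss : ℝ)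
    (ha22 : 0 < a22) (ha33 : 0 < a33) (hcb : 0 < cb) (hlam : 0 < lam)
    (hxss : 0 < xss) (hρ : 0 < ρ) (hr : 0 < r) (htss : 0 < tss)
    (B : ℝ → Matrix (Fin 3) (Fin 3) ℝ) (hBcont : Continuous B)
    (hBbound : ∀ t : ℝ, ∀ i j : Fin 3, |B t i j| ≤ cb * Real.exp (-lam * |t|))
    (hcond1 : 6 * cb * Real.exp (-lam * tss) < min a22 a33)
    (hcond2 : 2 * cb * Real.exp (-lam * tss) * (1 + (xss + 2 * ρ) / r) < min a22 a33)
    (hcond3 : (1 / lam) * cb * Real.exp (-lam * tss) * (xss + 2 * ρ + 2 * r) < ρ) :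
    ∀ p : Fin 3 → ℝ, p 0 = xss → (p 1) ^ 2 + (p 2) ^ 2 ≤ r ^ 2 →
      ∀ γ : ℝ → Fin 3 → ℝ, IsLinSolution a22 a33 B γ → γ tss = p →
        ∃ xp ∈ Set.Icc (xss - ρ) (xss + ρ),
          Tendsto γ atTop (nhds ![xp, 0, 0]) := by
  intro p hp0 hpr γ hγ hγt
  have hγc : Continuous γ := continuous_iff_continuousAt.2 fun t => (hγ t).continuousAt
  have hBc : ∀ i j : Fin 3, Continuous fun t => B t i j := fun i j =>
    (continuous_apply j).comp ((continuous_apply i).comp hBcont)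
  have hγic : ∀ i : Fin 3, Continuous fun t => γ t i := fun i =>
    (continuous_apply i).comp hγc
  have hmv : ∀ (M : Matrix (Fin 3) (Fin 3) ℝ) (v : Fin 3 → ℝ),
      ((Amat a22 a33 + M).mulVec v) 0 = M 0 0 * v 0 + M 0 1 * v 1 + M 0 2 * v 2 ∧
      ((Amat a22 a33 + M).mulVec v) 1
        = -(a22 * v 1) + (M 1 0 * v 0 + M 1 1 * v 1 + M 1 2 * v 2) ∧
      ((Amat a22 a33 + M).mulVec v) 2
        = -(a33 * v 2) + (M 2 0 * v 0 + M 2 1 * v 1 + M 2 2 * v 2) := by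
    intro M v
    refine ⟨?_, ?_, ?_⟩ <;>
      simp [Amat, Matrix.mulVec, dotProduct, Fin.sum_univ_three, Matrix.diagonal] <;>
      ring
  have hD : ∀ (t : ℝ) (i : Fin 3),
      HasDerivAt (fun u => γ u i) (((Amat a22 a33 + B t).mulVec (γ t)) i) t :=
    fun t i => (hasDerivAt_pi.1 (hγ t)) i
  have hdx : ∀ t, HasDerivAt (fun u => γ u 0)
      (B t 0 0 * γ t 0 + B t 0 1 * γ t 1 + B t 0 2 * γ t 2) t := by
    intro t
    have h := hD t 0
    rwa [(hmv (B t) (γ t)).1] at h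
  have hdy1 : ∀ t, HasDerivAt (fun u => γ u 1)
      (-(a22 * γ t 1) + (B t 1 0 * γ t 0 + B t 1 1 * γ t 1 + B t 1 2 * γ t 2)) t := by
    intro t
    have h := hD t 1
    rwa [(hmv (B t) (γ t)).2.1] at h
  have hdy2 : ∀ t, HasDerivAt (fun u => γ u 2)
      (-(a33 * γ t 2) + (B t 2 0 * γ t 0 + B t 2 1 * γ t 1 + B t 2 2 * γ t 2)) t := by
    intro t
    have h := hD t 2
    rwa [(hmv (B t) (γ t)).2.2] at h
  have hrow : ∀ (i : Fin 3) (t : ℝ), tss ≤ t →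
      |B t i 0 * γ t 0 + B t i 1 * γ t 1 + B t i 2 * γ t 2|
        ≤ cb * Real.exp (-lam * t) * (|γ t 0| + |γ t 1| + |γ t 2|) := by
    intro i t ht
    have hb : ∀ j : Fin 3, |B t i j| ≤ cb * Real.exp (-lam * t) := by
      intro j
      have h := hBbound t i j
      rwa [abs_of_pos (lt_of_lt_of_le htss ht)] at h
    have h0 := hb 0
    have h1 := hb 1
    have h2 := hb 2
    calc |B t i 0 * γ t 0 + B t i 1 * γ t 1 + B t i 2 * γ t 2|
        ≤ |B t i 0 * γ t 0| + |B t i 1 * γ t 1| + |B t i 2 * γ t 2| :=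
          (abs_add_le _ _).trans (add_le_add_left (abs_add_le _ _) _)
    _ = |B t i 0| * |γ t 0| + |B t i 1| * |γ t 1| + |B t i 2| * |γ t 2| := by
          rw [abs_mul, abs_mul, abs_mul]
    _ ≤ cb * Real.exp (-lam * t) * (|γ t 0| + |γ t 1| + |γ t 2|) := by
          nlinarith [abs_nonneg (γ t 0), abs_nonneg (γ t 1), abs_nonneg (γ t 2),
            abs_nonneg (B t i 0), abs_nonneg (B t i 1), abs_nonneg (B t i 2)]
  have hq0c : Continuous fun t => B t 0 0 * γ t 0 + B t 0 1 * γ t 1 + B t 0 2 * γ t 2 :=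
    (((hBc 0 0).mul (hγic 0)).add ((hBc 0 1).mul (hγic 1))).add ((hBc 0 2).mul (hγic 2))
  obtain ⟨xp, hxp, hxt, hy1t, hy2t⟩ :=
    scalar_forward_convergence a22 a33 cb lam xss ρ r tss
      ha22 ha33 hcb hlam hxss hρ hr htss hcond1 hcond2 hcond3
      (fun t => γ t 0) (fun t => γ t 1) (fun t => γ t 2)
      (fun t => B t 0 0 * γ t 0 + B t 0 1 * γ t 1 + B t 0 2 * γ t 2)
      (fun t => B t 1 0 * γ t 0 + B t 1 1 * γ t 1 + B t 1 2 * γ t 2)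
      (fun t => B t 2 0 * γ t 0 + B t 2 1 * γ t 1 + B t 2 2 * γ t 2)
      hq0c hdx hdy1 hdy2 (hrow 0) (hrow 1) (hrow 2)
      (by show γ tss 0 = xss; rw [hγt, hp0])
      (by show γ tss 1 ^ 2 + γ tss 2 ^ 2 ≤ r ^ 2; rw [hγt]; exact hpr)
  refine ⟨xp, hxp, ?_⟩
  rw [tendsto_pi_nhds]
  intro i
  fin_cases i
  · simpa using hxt
  · simpa using hy1t
  · simpa using hy2t
end

section
/- Under the hypotheses of the unstable-manifold theorem (f C¹ on D = B̄_u(R) × B̄_s(R), rate conditions μ⃗ < 0 < ξ⃗, D an isolating block), let W^u = { z ∈ D : there exists a solution γ : (−∞, 0] → D of γ' = f(γ) with γ(0) = z }, which is the graph of an L-Lipschitz function. Then for any p₁, p₂ ∈ W^u, with γ₁, γ₂ : (−∞,0] → D the corresponding backward solutions with γᵢ(0) = pᵢ, one has for all t ≥ 0: ‖γ₁(−t) − γ₂(−t)‖ ≤ c·e^{−ξ⃗·t}·‖π_x(p₁ − p₂)‖, where c = 2·√(1 + L²). -/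
open Filter Set Metric

noncomputable section

abbrev Esp (n : ℕ) : Type := EuclideanSpace ℝ (Fin n)

/-- Logarithmic norm `l(A) = lim_{h→0⁺} (‖I + hA‖ - 1)/h` (operator norm). -/
def logNorm {n : ℕ} (T : Esp n →L[ℝ] Esp n) : ℝ :=
  limUnder (nhdsWithin (0:ℝ) (Set.Ioi 0))
    (fun h : ℝ => (‖ContinuousLinearMap.id ℝ (Esp n) + h • T‖ - 1) / h)

-- `m(A) = 1/‖A⁻¹‖` if `A` is invertible, `0` otherwise.
open scoped Classical in
def mVal {n : ℕ} (T : Esp n →L[ℝ] Esp n) : ℝ :=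
  if IsUnit T then ‖Ring.inverse T‖⁻¹ else 0

/-- `m_l(A) = -l(-A)`. -/
def mlVal {n : ℕ} (T : Esp n →L[ℝ] Esp n) : ℝ := - logNorm (-T)

/-- The continuous linear map on Euclidean spaces associated with a matrix. -/
def opOf {m n : ℕ} (M : Matrix (Fin m) (Fin n) ℝ) : Esp n →L[ℝ] Esp m :=
  LinearMap.toContinuousLinearMap (Matrix.toEuclideanLin M)

/-- Interval hull of a family of matrices over a set `D`. -/
def intervalHull {α : Type*} {m n : ℕ} (g : α → Matrix (Fin m) (Fin n) ℝ) (D : Set α) :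
    Set (Matrix (Fin m) (Fin n) ℝ) :=
  {M | ∀ i j, M i j ∈
    Set.Icc (sInf ((fun p => g p i j) '' D)) (sSup ((fun p => g p i j) '' D))}

variable {u s : ℕ}

/-- The `yy`-block of a linear map on `ℝᵘ × ℝˢ`. -/
def blockYY (T : (Esp u × Esp s) →L[ℝ] (Esp u × Esp s)) : Esp s →L[ℝ] Esp s :=
  (ContinuousLinearMap.snd ℝ (Esp u) (Esp s)).comp
    (T.comp (ContinuousLinearMap.inr ℝ (Esp u) (Esp s)))

/-- The `yx`-block. -/
def blockYX (T : (Esp u × Esp s) →L[ℝ] (Esp u × Esp s)) : Esp u →L[ℝ] Esp s :=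
  (ContinuousLinearMap.snd ℝ (Esp u) (Esp s)).comp
    (T.comp (ContinuousLinearMap.inl ℝ (Esp u) (Esp s)))

/-- The `xx`-block. -/
def blockXX (T : (Esp u × Esp s) →L[ℝ] (Esp u × Esp s)) : Esp u →L[ℝ] Esp u :=
  (ContinuousLinearMap.fst ℝ (Esp u) (Esp s)).comp
    (T.comp (ContinuousLinearMap.inl ℝ (Esp u) (Esp s)))

/-- The `xy`-block. -/
def blockXY (T : (Esp u × Esp s) →L[ℝ] (Esp u × Esp s)) : Esp s →L[ℝ] Esp u :=
  (ContinuousLinearMap.fst ℝ (Esp u) (Esp s)).comp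
    (T.comp (ContinuousLinearMap.inr ℝ (Esp u) (Esp s)))

/-- Matrix of partial derivatives `∂(f_x)_i/∂x_j` at `z`. -/
def DxxMat (f : Esp u × Esp s → Esp u × Esp s) (z : Esp u × Esp s) :
    Matrix (Fin u) (Fin u) ℝ :=
  Matrix.of fun i j => blockXX (fderiv ℝ f z) (EuclideanSpace.single j 1) i

/-- Matrix of partial derivatives `∂(f_x)_i/∂y_j` at `z`. -/
def DxyMat (f : Esp u × Esp s → Esp u × Esp s) (z : Esp u × Esp s) :
    Matrix (Fin u) (Fin s) ℝ :=
  Matrix.of fun i j => blockXY (fderiv ℝ f z) (EuclideanSpace.single j 1) i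

/-- `μ⃗ = sup_{z∈D} { l(∂f_y/∂y(z)) + (1/L)‖∂f_y/∂x(z)‖ }`. -/
def muArrow (L : ℝ) (f : Esp u × Esp s → Esp u × Esp s) (D : Set (Esp u × Esp s)) : ℝ :=
  sSup ((fun z => logNorm (blockYY (fderiv ℝ f z)) + (1 / L) * ‖blockYX (fderiv ℝ f z)‖) '' D)

/-- `ξ⃗ = m_l(∂f_x/∂x(D)) - L‖∂f_x/∂y(D)‖` (interval-hull versions). -/
def xiArrow (L : ℝ) (f : Esp u × Esp s → Esp u × Esp s) (D : Set (Esp u × Esp s)) : ℝ :=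
  sInf ((fun M => mlVal (opOf M)) '' intervalHull (DxxMat f) D)
    - L * sSup ((fun M => ‖opOf M‖) '' intervalHull (DxyMat f) D)

end

/-! ### Auxiliary lemmas -/

noncomputable section Aux

open RealInnerProductSpace

namespace LogNormAux

variable {n : ℕ} (T : Esp n →L[ℝ] Esp n)

/-- difference quotient -/
def quot (h : ℝ) : ℝ := (‖ContinuousLinearMap.id ℝ (Esp n) + h • T‖ - 1) / h

lemma convex_phi : ConvexOn ℝ univ (fun h : ℝ => ‖ContinuousLinearMap.id ℝ (Esp n) + h • T‖) := by
  have h1 : (fun h : ℝ => ‖ContinuousLinearMap.id ℝ (Esp n) + h • T‖)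
      = (norm ∘ (AffineMap.lineMap (ContinuousLinearMap.id ℝ (Esp n))
        (ContinuousLinearMap.id ℝ (Esp n) + T))) := by
    funext h
    simp only [Function.comp_apply, AffineMap.lineMap_apply, vsub_eq_sub, vadd_eq_add,
      add_sub_cancel_left]
    rw [add_comm]
  rw [h1]
  simpa using (convexOn_univ_norm (E := Esp n →L[ℝ] Esp n)).comp_affineMap _

lemma quot_mono [Nontrivial (Esp n)] : MonotoneOn (quot T) (Ioi 0) := by
  intro a ha b hb hab
  have h := (convex_phi T).secant_mono (a := 0) (x := a) (y := b)
    (mem_univ _) (mem_univ _) (mem_univ _) (ne_of_gt ha) (ne_of_gt hb) hab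
  have e0 : (0:ℝ) • T = 0 := zero_smul ℝ T
  rw [e0, add_zero, ContinuousLinearMap.norm_id] at h
  simp only [quot, sub_zero] at h ⊢
  convert h using 2 <;> ring

lemma quot_ge (h : ℝ) (hh : 0 < h) [Nontrivial (Esp n)] : -‖T‖ ≤ quot T h := by
  have h1 : (1:ℝ) - h * ‖T‖ ≤ ‖ContinuousLinearMap.id ℝ (Esp n) + h • T‖ := by
    have := norm_sub_le (ContinuousLinearMap.id ℝ (Esp n) + h • T) (h • T)
    rw [add_sub_cancel_right, ContinuousLinearMap.norm_id] at this
    have hnorm : ‖h • T‖ = h * ‖T‖ := by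
      rw [norm_smul h T, Real.norm_eq_abs, abs_of_pos hh]
    linarith
  rw [quot, le_div_iff₀ hh]
  nlinarith [norm_nonneg T]

lemma quot_le (h : ℝ) (hh : 0 < h) [Nontrivial (Esp n)] : quot T h ≤ ‖T‖ := by
  have h1 : ‖ContinuousLinearMap.id ℝ (Esp n) + h • T‖ ≤ 1 + h * ‖T‖ := by
    have := norm_add_le (ContinuousLinearMap.id ℝ (Esp n)) (h • T)
    rw [ContinuousLinearMap.norm_id] at this
    have hnorm : ‖h • T‖ = h * ‖T‖ := by
      rw [norm_smul h T, Real.norm_eq_abs, abs_of_pos hh]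
    linarith
  rw [quot, div_le_iff₀ hh]
  nlinarith [norm_nonneg T]

lemma tendsto_quot [Nontrivial (Esp n)] :
    Tendsto (quot T) (nhdsWithin (0:ℝ) (Set.Ioi 0)) (nhds (sInf (quot T '' Ioi 0))) :=
  (quot_mono T).tendsto_nhdsGT
    ⟨-‖T‖, by rintro x ⟨h, hh, rfl⟩; exact quot_ge T h hh⟩

lemma logNorm_eq [Nontrivial (Esp n)] : logNorm T = sInf (quot T '' Ioi 0) :=
  (tendsto_quot T).limUnder_eq

lemma tendsto_logNorm [Nontrivial (Esp n)] :
    Tendsto (quot T) (nhdsWithin (0:ℝ) (Set.Ioi 0)) (nhds (logNorm T)) := by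
  rw [logNorm_eq]; exact tendsto_quot T

lemma logNorm_le_norm [Nontrivial (Esp n)] : logNorm T ≤ ‖T‖ := by
  rw [logNorm_eq]
  exact le_trans (csInf_le ⟨-‖T‖, by rintro x ⟨h, hh, rfl⟩; exact quot_ge T h hh⟩
    ⟨1, by norm_num, rfl⟩) (quot_le T 1 one_pos)

lemma neg_norm_le_logNorm [Nontrivial (Esp n)] : -‖T‖ ≤ logNorm T := by
  rw [logNorm_eq]
  exact le_csInf ⟨_, ⟨1, by norm_num, rfl⟩⟩ (by rintro x ⟨h, hh, rfl⟩; exact quot_ge T h hh)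

lemma inner_le_logNorm [Nontrivial (Esp n)] (x : Esp n) :
    ⟪T x, x⟫ ≤ logNorm T * ‖x‖^2 := by
  set φ : ℝ → ℝ := fun h => ‖ContinuousLinearMap.id ℝ (Esp n) + h • T‖ with hφ
  have hφc : Continuous φ := by
    have : Continuous fun h : ℝ => ContinuousLinearMap.id ℝ (Esp n) + h • T :=
      continuous_const.add (continuous_id.smul continuous_const)
    exact this.norm
  have hφ0 : φ 0 = 1 := by
    simp only [hφ]
    have e0 : (0:ℝ) • T = 0 := zero_smul ℝ T
    rw [e0, add_zero, ContinuousLinearMap.norm_id]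
  have htφ : Tendsto φ (nhdsWithin (0:ℝ) (Set.Ioi 0)) (nhds 1) := by
    have := hφc.tendsto 0
    rw [hφ0] at this
    exact this.mono_left nhdsWithin_le_nhds
  have hmain : Tendsto (fun h => quot T h * ((φ h + 1)/2) * ‖x‖^2)
      (nhdsWithin (0:ℝ) (Set.Ioi 0)) (nhds (logNorm T * ‖x‖^2)) := by
    have h2 : Tendsto (fun h => (φ h + 1)/2) (nhdsWithin (0:ℝ) (Set.Ioi 0)) (nhds 1) := by
      have := (htφ.add (tendsto_const_nhds (x := (1:ℝ)))).div_const 2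
      norm_num at this
      exact this
    have := ((tendsto_logNorm T).mul h2).mul_const (‖x‖^2)
    simpa using this
  refine ge_of_tendsto hmain ?_
  filter_upwards [self_mem_nhdsWithin] with h (hh : 0 < h)
  have hineq : ‖x + h • T x‖ ≤ φ h * ‖x‖ := by
    have : (ContinuousLinearMap.id ℝ (Esp n) + h • T) x = x + h • T x := by
      simp
    rw [← this]
    exact ContinuousLinearMap.le_opNorm _ x
  have hsq : ‖x + h • T x‖^2 ≤ (φ h * ‖x‖)^2 := by
    have h0 : (0:ℝ) ≤ ‖x + h • T x‖ := norm_nonneg _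
    nlinarith [norm_nonneg (x + h • T x)]
  rw [norm_add_sq_real] at hsq
  have hip : ⟪x, h • T x⟫ = h * ⟪T x, x⟫ := by
    rw [real_inner_smul_right, real_inner_comm]
  rw [hip] at hsq
  have hq : φ h - 1 = quot T h * h := by
    rw [quot]; field_simp; rfl
  have hφpos : 0 ≤ φ h := norm_nonneg _
  have key : 2 * h * ⟪T x, x⟫ ≤ (φ h ^2 - 1) * ‖x‖^2 := by
    nlinarith [norm_nonneg (h • T x), sq_nonneg ‖h • T x‖]
  have expand : (φ h ^2 - 1) = quot T h * h * (φ h + 1) := by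
    have : φ h ^ 2 - 1 = (φ h - 1) * (φ h + 1) := by ring
    rw [this, hq]
  rw [expand] at key
  have h2h : (0:ℝ) < 2*h := by linarith
  rw [show quot T h * ((φ h + 1)/2) * ‖x‖^2
      = (quot T h * h * (φ h + 1) * ‖x‖^2)/(2*h) by field_simp]
  rw [le_div_iff₀ h2h]
  nlinarith [key]

lemma mlVal_le_inner [Nontrivial (Esp n)] (x : Esp n) :
    mlVal T * ‖x‖^2 ≤ ⟪T x, x⟫ := by
  have h := inner_le_logNorm (-T) x
  rw [ContinuousLinearMap.neg_apply, inner_neg_left] at h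
  rw [mlVal]
  linarith

end LogNormAux

/-! matrix-operator lemmas -/

lemma opOf_apply {m n : ℕ} (M : Matrix (Fin m) (Fin n) ℝ) (v : Esp n) (i : Fin m) :
    opOf M v i = ∑ j, M i j * v j := rfl

lemma euclid_decomp {n : ℕ} (v : Esp n) :
    v = ∑ j, v j • EuclideanSpace.single j (1:ℝ) := by
  ext i
  rw [show (∑ j, v j • EuclideanSpace.single j (1:ℝ)) i
      = ∑ j, (v j • EuclideanSpace.single j (1:ℝ)) i by rw [WithLp.ofLp_sum]; exact Finset.sum_apply i _ _]
  simp [EuclideanSpace.single_apply]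

lemma euclid_norm_le_sum_abs {n : ℕ} (v : Esp n) : ‖v‖ ≤ ∑ i, |v i| := by
  calc ‖v‖ = ‖∑ j, v j • EuclideanSpace.single j (1:ℝ)‖ := by rw [← euclid_decomp]
    _ ≤ ∑ j, ‖v j • EuclideanSpace.single j (1:ℝ)‖ := norm_sum_le _ _
    _ = ∑ j, |v j| := by
        refine Finset.sum_congr rfl fun j _ => ?_
        rw [norm_smul, Real.norm_eq_abs, EuclideanSpace.norm_single]
        norm_num

lemma abs_coord_le_norm {n : ℕ} (v : Esp n) (i : Fin n) : |v i| ≤ ‖v‖ := by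
  rw [EuclideanSpace.norm_eq]
  simp only [Real.norm_eq_abs, sq_abs]
  rw [show |v i| = Real.sqrt ((v i)^2) by rw [Real.sqrt_sq_eq_abs]]
  apply Real.sqrt_le_sqrt
  exact Finset.single_le_sum (f := fun j => (v j)^2) (fun j _ => sq_nonneg _) (Finset.mem_univ i)

lemma opOf_norm_le {m n : ℕ} (M : Matrix (Fin m) (Fin n) ℝ) (C : ℝ) (hC : 0 ≤ C)
    (h : ∀ i j, |M i j| ≤ C) : ‖opOf M‖ ≤ (m * n : ℕ) * C := by
  apply ContinuousLinearMap.opNorm_le_bound _ (by positivity)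
  intro v
  calc ‖opOf M v‖ ≤ ∑ i, |opOf M v i| := euclid_norm_le_sum_abs _
    _ ≤ ∑ _i : Fin m, ∑ _j : Fin n, C * ‖v‖ := by
        refine Finset.sum_le_sum fun i _ => ?_
        rw [opOf_apply]
        calc |∑ j, M i j * v j| ≤ ∑ j, |M i j * v j| := Finset.abs_sum_le_sum_abs _ _
          _ ≤ ∑ _j : Fin n, C * ‖v‖ := by
              refine Finset.sum_le_sum fun j _ => ?_
              rw [abs_mul]
              exact mul_le_mul (h i j) (abs_coord_le_norm v j) (abs_nonneg _) hC
    _ = (m * n : ℕ) * C * ‖v‖ := by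
        simp [Finset.sum_const]
        ring

lemma opOf_eq_of_basis {m n : ℕ} (M : Matrix (Fin m) (Fin n) ℝ) (T : Esp n →L[ℝ] Esp m)
    (h : ∀ i j, M i j = T (EuclideanSpace.single j 1) i) : opOf M = T := by
  ext v : 1
  conv_rhs => rw [euclid_decomp v]
  rw [map_sum]
  ext i
  rw [opOf_apply]
  rw [show (∑ j, T (v j • EuclideanSpace.single j (1:ℝ))) i
      = ∑ j, (T (v j • EuclideanSpace.single j (1:ℝ))) i by rw [WithLp.ofLp_sum]; exact Finset.sum_apply i _ _]
  refine Finset.sum_congr rfl fun j _ => ?_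
  rw [map_smul, h i j]
  simp [mul_comm]

variable {u s : ℕ}

lemma opOf_DxxMat (f : Esp u × Esp s → Esp u × Esp s) (z : Esp u × Esp s) :
    opOf (DxxMat f z) = blockXX (fderiv ℝ f z) :=
  opOf_eq_of_basis _ _ (fun _ _ => rfl)

lemma opOf_DxyMat (f : Esp u × Esp s → Esp u × Esp s) (z : Esp u × Esp s) :
    opOf (DxyMat f z) = blockXY (fderiv ℝ f z) :=
  opOf_eq_of_basis _ _ (fun _ _ => rfl)

lemma fst_decomp (T : (Esp u × Esp s) →L[ℝ] (Esp u × Esp s)) (a : Esp u) (b : Esp s) :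
    (T (a, b)).1 = blockXX T a + blockXY T b := by
  have h : (a, b) = ((a, 0) : Esp u × Esp s) + (0, b) := by simp
  rw [h, map_add]
  rfl

lemma snd_decomp (T : (Esp u × Esp s) →L[ℝ] (Esp u × Esp s)) (a : Esp u) (b : Esp s) :
    (T (a, b)).2 = blockYX T a + blockYY T b := by
  have h : (a, b) = ((a, 0) : Esp u × Esp s) + (0, b) := by simp
  rw [h, map_add]
  rfl

lemma blockYY_norm_le (T : (Esp u × Esp s) →L[ℝ] (Esp u × Esp s)) : ‖blockYY T‖ ≤ ‖T‖ := by
  apply ContinuousLinearMap.opNorm_le_bound _ (norm_nonneg T)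
  intro y
  calc ‖blockYY T y‖ ≤ ‖T ((0 : Esp u), y)‖ := norm_snd_le _
    _ ≤ ‖T‖ * ‖((0 : Esp u), y)‖ := T.le_opNorm _
    _ = ‖T‖ * ‖y‖ := by
        rw [Prod.norm_def]
        simp [norm_zero, max_eq_right (norm_nonneg y)]

lemma blockXX_norm_le (T : (Esp u × Esp s) →L[ℝ] (Esp u × Esp s)) : ‖blockXX T‖ ≤ ‖T‖ := by
  apply ContinuousLinearMap.opNorm_le_bound _ (norm_nonneg T)
  intro x
  calc ‖blockXX T x‖ ≤ ‖T (x, (0 : Esp s))‖ := norm_fst_le _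
    _ ≤ ‖T‖ * ‖(x, (0 : Esp s))‖ := T.le_opNorm _
    _ = ‖T‖ * ‖x‖ := by
        rw [Prod.norm_def]
        simp [norm_zero, max_eq_left (norm_nonneg x)]

lemma blockXY_norm_le (T : (Esp u × Esp s) →L[ℝ] (Esp u × Esp s)) : ‖blockXY T‖ ≤ ‖T‖ := by
  apply ContinuousLinearMap.opNorm_le_bound _ (norm_nonneg T)
  intro y
  calc ‖blockXY T y‖ ≤ ‖T ((0 : Esp u), y)‖ := norm_fst_le _
    _ ≤ ‖T‖ * ‖((0 : Esp u), y)‖ := T.le_opNorm _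
    _ = ‖T‖ * ‖y‖ := by
        rw [Prod.norm_def]
        simp [norm_zero, max_eq_right (norm_nonneg y)]

lemma blockYX_norm_le (T : (Esp u × Esp s) →L[ℝ] (Esp u × Esp s)) : ‖blockYX T‖ ≤ ‖T‖ := by
  apply ContinuousLinearMap.opNorm_le_bound _ (norm_nonneg T)
  intro x
  calc ‖blockYX T x‖ ≤ ‖T (x, (0 : Esp s))‖ := norm_snd_le _
    _ ≤ ‖T‖ * ‖(x, (0 : Esp s))‖ := T.le_opNorm _
    _ = ‖T‖ * ‖x‖ := by
        rw [Prod.norm_def]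
        simp [norm_zero, max_eq_left (norm_nonneg x)]

/-! calculus helpers -/

lemma le_of_deriv_nonpos {g g' : ℝ → ℝ} {a b : ℝ} (hab : a ≤ b)
    (hd : ∀ t ∈ Icc a b, HasDerivAt g (g' t) t) (h0 : ∀ t ∈ Icc a b, g' t ≤ 0) :
    g b ≤ g a := by
  have hmono : AntitoneOn g (Icc a b) :=
    antitoneOn_of_deriv_nonpos (convex_Icc a b)
      (fun t ht => (hd t ht).continuousAt.continuousWithinAt)
      (fun t ht => (hd t (interior_subset ht)).differentiableAt.differentiableWithinAt)
      (fun t ht => by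
        rw [(hd t (interior_subset ht)).deriv]; exact h0 t (interior_subset ht))
  exact hmono (left_mem_Icc.2 hab) (right_mem_Icc.2 hab) hab

lemma le_of_deriv_nonneg {g g' : ℝ → ℝ} {a b : ℝ} (hab : a ≤ b)
    (hd : ∀ t ∈ Icc a b, HasDerivAt g (g' t) t) (h0 : ∀ t ∈ Icc a b, 0 ≤ g' t) :
    g a ≤ g b := by
  have := le_of_deriv_nonpos (g := fun t => -g t) (g' := fun t => -g' t) hab
    (fun t ht => (hd t ht).neg) (fun t ht => neg_nonpos.2 (h0 t ht))
  linarith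

lemma deriv_nonneg_of_right_pos {V : ℝ → ℝ} {v t₁ t₀ : ℝ} (h : t₁ < t₀)
    (hd : HasDerivAt V v t₁) (h0 : V t₁ = 0) (hp : ∀ x ∈ Ioc t₁ t₀, 0 < V x) : 0 ≤ v := by
  have ht : Tendsto (slope V t₁) (nhdsWithin t₁ (Ioi t₁)) (nhds v) :=
    (hasDerivAt_iff_tendsto_slope.1 hd).mono_left
      (nhdsWithin_mono _ fun x hx => (Set.mem_compl_singleton_iff).2 (ne_of_gt hx))
  refine ge_of_tendsto ht ?_
  filter_upwards [Ioc_mem_nhdsGT_of_mem ⟨le_refl t₁, h⟩] with x hx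
  rw [slope_def_field]
  have h1 : 0 < V x := hp x hx
  have h2 : 0 < x - t₁ := sub_pos.2 hx.1
  rw [h0, sub_zero]
  positivity

open RealInnerProductSpace in
lemma hasDerivAt_norm_sq {n : ℕ} {c : ℝ → Esp n} {c' : Esp n} {τ : ℝ}
    (h : HasDerivAt c c' τ) :
    HasDerivAt (fun x => ‖c x‖^2) (2*⟪c', c τ⟫) τ := by
  have h1 := h.inner ℝ h
  have h2 : (fun t => ⟪c t, c t⟫) = fun t => ‖c t‖^2 := by
    funext t; rw [real_inner_self_eq_norm_sq]
  rw [h2] at h1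
  refine h1.congr_deriv ?_
  rw [real_inner_comm]
  ring

lemma le_of_sq_le_sq' {a b : ℝ} (hb : 0 ≤ b) (h : a^2 ≤ b^2) (ha : 0 ≤ a) : a ≤ b := by
  nlinarith

open RealInnerProductSpace in
lemma mvt_proj {u s k : ℕ} {f : Esp u × Esp s → Esp u × Esp s} (hf : ContDiff ℝ 1 f)
    {D : Set (Esp u × Esp s)} (hDconv : Convex ℝ D)
    (P : (Esp u × Esp s) →L[ℝ] Esp k) {p q : Esp u × Esp s} (hp : p ∈ D) (hq : q ∈ D)
    (w : Esp k) :
    ∃ z ∈ D, ⟪P (f p) - P (f q), w⟫ = ⟪P ((fderiv ℝ f z) (p - q)), w⟫ := by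
  set c : ℝ → Esp u × Esp s := fun θ => q + θ • (p - q) with hc
  have hcd : ∀ θ : ℝ, HasDerivAt c (p - q) θ := by
    intro θ
    have := ((hasDerivAt_id θ).smul_const (p - q)).const_add q
    simpa [hc] using this
  set g : ℝ → ℝ := fun θ => ⟪P (f (c θ)), w⟫ with hg
  have hgd : ∀ θ : ℝ, HasDerivAt g (⟪P ((fderiv ℝ f (c θ)) (p - q)), w⟫) θ := by
    intro θ
    have h1 : HasDerivAt (fun θ => f (c θ)) ((fderiv ℝ f (c θ)) (p - q)) θ :=
      ((hf.differentiable one_ne_zero (c θ)).hasFDerivAt).comp_hasDerivAt θ (hcd θ)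
    have h2 : HasDerivAt (fun θ => P (f (c θ))) (P ((fderiv ℝ f (c θ)) (p - q))) θ :=
      (P.hasFDerivAt).comp_hasDerivAt θ h1
    have h3 := h2.inner ℝ (hasDerivAt_const θ w)
    simpa using h3
  obtain ⟨θ, hθ, heq⟩ := exists_hasDerivAt_eq_slope g
    (fun θ => ⟪P ((fderiv ℝ f (c θ)) (p - q)), w⟫) zero_lt_one
    (fun x _ => (hgd x).continuousAt.continuousWithinAt)
    (fun x _ => hgd x)
  refine ⟨c θ, hDconv.add_smul_sub_mem hq hp ⟨hθ.1.le, hθ.2.le⟩, ?_⟩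
  have hc1 : c 1 = p := by simp [hc]
  have hc0 : c 0 = q := by simp [hc]
  have hgval : (g 1 - g 0) / (1 - 0) = ⟪P (f p) - P (f q), w⟫ := by
    simp only [hg]
    rw [hc1, hc0, inner_sub_left]
    norm_num
  exact hgval.symm.trans heq.symm

end Aux

set_option maxHeartbeats 3200000 in
open RealInnerProductSpace in
/-- **Theorem (backward contraction rate on the unstable manifold).**
Under the hypotheses of the unstable-manifold theorem, for any two points
`p₁, p₂ ∈ Wᵘ` with corresponding backward solutions `γ₁, γ₂ : (-∞,0] → D`,
`‖γ₁(-t) - γ₂(-t)‖ ≤ c e^{-ξ⃗ t} ‖π_x(p₁ - p₂)‖` for all `t ≥ 0`, with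
`c = 2√(1 + L²)`. -/
theorem unstable_manifold_backward_contraction {u s : ℕ} (R L : ℝ) (hR : 0 < R)
    (hL : 0 < L)
    (f : Esp u × Esp s → Esp u × Esp s) (hf : ContDiff ℝ 1 f)
    (D : Set (Esp u × Esp s))
    (hD : D = closedBall (0 : Esp u) R ×ˢ closedBall (0 : Esp s) R)
    (hmu : muArrow L f D < 0) (hxi : 0 < xiArrow L f D)
    (hiso1 : ∀ q : Esp u × Esp s, q ∈ sphere (0 : Esp u) R ×ˢ closedBall (0 : Esp s) R →
      0 < (inner ℝ ((f q).1) q.1 : ℝ))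
    (hiso2 : ∀ q : Esp u × Esp s, q ∈ closedBall (0 : Esp u) R ×ˢ sphere (0 : Esp s) R →
      (inner ℝ ((f q).2) q.2 : ℝ) < 0) :
    ∀ γ₁ γ₂ : ℝ → Esp u × Esp s,
      (∀ t : ℝ, t ≤ 0 → γ₁ t ∈ D ∧ HasDerivAt γ₁ (f (γ₁ t)) t) →
      (∀ t : ℝ, t ≤ 0 → γ₂ t ∈ D ∧ HasDerivAt γ₂ (f (γ₂ t)) t) →
      ∀ t : ℝ, 0 ≤ t →
        ‖γ₁ (-t) - γ₂ (-t)‖ ≤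
          2 * Real.sqrt (1 + L ^ 2) * Real.exp (-(xiArrow L f D) * t) *
            ‖(γ₁ 0).1 - (γ₂ 0).1‖ := by
  intro γ₁ γ₂ h₁ h₂ t ht
  -- basic facts about D
  have hDconv : Convex ℝ D := by
    rw [hD]; exact (convex_closedBall _ _).prod (convex_closedBall _ _)
  have hDcomp : IsCompact D := by
    rw [hD]; exact (isCompact_closedBall _ _).prod (isCompact_closedBall _ _)
  have hDne : D.Nonempty := by
    rw [hD]
    exact ⟨(0, 0), mem_closedBall_self hR.le, mem_closedBall_self hR.le⟩
  obtain ⟨K₀, hK₀⟩ := hDcomp.exists_bound_of_continuousOn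
    ((hf.continuous_fderiv one_ne_zero).continuousOn)
  set K : ℝ := max K₀ 0 with hKdef
  have hK : ∀ z ∈ D, ‖fderiv ℝ f z‖ ≤ K := fun z hz => (hK₀ z hz).trans (le_max_left _ _)
  have hK0 : (0:ℝ) ≤ K := le_max_right _ _
  set ζ : ℝ → Esp u := fun τ => (γ₁ τ).1 - (γ₂ τ).1 with hζdef
  set η : ℝ → Esp s := fun τ => (γ₁ τ).2 - (γ₂ τ).2 with hηdef
  set Fx : ℝ → Esp u := fun τ => (f (γ₁ τ)).1 - (f (γ₂ τ)).1 with hFxdef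
  set Fy : ℝ → Esp s := fun τ => (f (γ₁ τ)).2 - (f (γ₂ τ)).2 with hFydef
  have memD : ∀ τ, τ ≤ 0 → γ₁ τ ∈ D ∧ γ₂ τ ∈ D := fun τ hτ => ⟨(h₁ τ hτ).1, (h₂ τ hτ).1⟩
  have hdζ : ∀ τ, τ ≤ 0 → HasDerivAt ζ (Fx τ) τ := by
    intro τ hτ
    have a1 : HasDerivAt (fun x => (γ₁ x).1) ((f (γ₁ τ)).1) τ :=
      ((ContinuousLinearMap.fst ℝ (Esp u) (Esp s)).hasFDerivAt).comp_hasDerivAt τ (h₁ τ hτ).2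
    have a2 : HasDerivAt (fun x => (γ₂ x).1) ((f (γ₂ τ)).1) τ :=
      ((ContinuousLinearMap.fst ℝ (Esp u) (Esp s)).hasFDerivAt).comp_hasDerivAt τ (h₂ τ hτ).2
    exact a1.sub a2
  have hdη : ∀ τ, τ ≤ 0 → HasDerivAt η (Fy τ) τ := by
    intro τ hτ
    have a1 : HasDerivAt (fun x => (γ₁ x).2) ((f (γ₁ τ)).2) τ :=
      ((ContinuousLinearMap.snd ℝ (Esp u) (Esp s)).hasFDerivAt).comp_hasDerivAt τ (h₁ τ hτ).2
    have a2 : HasDerivAt (fun x => (γ₂ x).2) ((f (γ₂ τ)).2) τ :=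
      ((ContinuousLinearMap.snd ℝ (Esp u) (Esp s)).hasFDerivAt).comp_hasDerivAt τ (h₂ τ hτ).2
    exact a1.sub a2
  -- mean value theorem, projected versions
  have mvtX : ∀ τ, τ ≤ 0 → ∀ w : Esp u, ∃ z ∈ D,
      ⟪Fx τ, w⟫ = ⟪blockXX (fderiv ℝ f z) (ζ τ) + blockXY (fderiv ℝ f z) (η τ), w⟫ := by
    intro τ hτ w
    obtain ⟨z, hz, he⟩ := mvt_proj hf hDconv (ContinuousLinearMap.fst ℝ (Esp u) (Esp s))
      (memD τ hτ).1 (memD τ hτ).2 w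
    refine ⟨z, hz, ?_⟩
    have h1 : (ContinuousLinearMap.fst ℝ (Esp u) (Esp s)) (f (γ₁ τ))
        - (ContinuousLinearMap.fst ℝ (Esp u) (Esp s)) (f (γ₂ τ)) = Fx τ := rfl
    rw [h1] at he
    rw [he]
    congr 1
    have h2 : γ₁ τ - γ₂ τ = (ζ τ, η τ) := rfl
    rw [h2]
    exact fst_decomp _ _ _
  have mvtY : ∀ τ, τ ≤ 0 → ∀ w : Esp s, ∃ z ∈ D,
      ⟪Fy τ, w⟫ = ⟪blockYX (fderiv ℝ f z) (ζ τ) + blockYY (fderiv ℝ f z) (η τ), w⟫ := by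
    intro τ hτ w
    obtain ⟨z, hz, he⟩ := mvt_proj hf hDconv (ContinuousLinearMap.snd ℝ (Esp u) (Esp s))
      (memD τ hτ).1 (memD τ hτ).2 w
    refine ⟨z, hz, ?_⟩
    have h1 : (ContinuousLinearMap.snd ℝ (Esp u) (Esp s)) (f (γ₁ τ))
        - (ContinuousLinearMap.snd ℝ (Esp u) (Esp s)) (f (γ₂ τ)) = Fy τ := rfl
    rw [h1] at he
    rw [he]
    congr 1
    have h2 : γ₁ τ - γ₂ τ = (ζ τ, η τ) := rfl
    rw [h2]
    exact snd_decomp _ _ _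
  -- entry bounds and hull facts
  have contXX : ∀ (i j : Fin u), Continuous fun p => DxxMat f p i j := by
    intro i j
    have h1 : (fun p => DxxMat f p i j) = fun p =>
        (EuclideanSpace.proj i)
          (((fderiv ℝ f p) ((EuclideanSpace.single j 1 : Esp u), (0:Esp s))).1) := rfl
    rw [h1]
    exact (EuclideanSpace.proj i).continuous.comp (continuous_fst.comp
      ((hf.continuous_fderiv one_ne_zero).clm_apply continuous_const))
  have contXY : ∀ (i : Fin u) (j : Fin s), Continuous fun p => DxyMat f p i j := by
    intro i j
    have h1 : (fun p => DxyMat f p i j) = fun p =>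
        (EuclideanSpace.proj i)
          (((fderiv ℝ f p) ((0:Esp u), (EuclideanSpace.single j 1 : Esp s))).1) := rfl
    rw [h1]
    exact (EuclideanSpace.proj i).continuous.comp (continuous_fst.comp
      ((hf.continuous_fderiv one_ne_zero).clm_apply continuous_const))
  have entryXX : ∀ z ∈ D, ∀ (i j : Fin u), |DxxMat f z i j| ≤ K := by
    intro z hz i j
    have h1 : DxxMat f z i j
        = ((fderiv ℝ f z) ((EuclideanSpace.single j 1 : Esp u), (0:Esp s))).1 i := rfl
    rw [h1]
    have hw : ‖((EuclideanSpace.single j 1 : Esp u), (0:Esp s))‖ = 1 := by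
      rw [Prod.norm_def]
      simp [EuclideanSpace.norm_single]
    calc |((fderiv ℝ f z) ((EuclideanSpace.single j 1 : Esp u), (0:Esp s))).1 i|
        ≤ ‖((fderiv ℝ f z) ((EuclideanSpace.single j 1 : Esp u), (0:Esp s))).1‖ :=
          abs_coord_le_norm _ i
      _ ≤ ‖(fderiv ℝ f z) ((EuclideanSpace.single j 1 : Esp u), (0:Esp s))‖ := norm_fst_le _
      _ ≤ ‖fderiv ℝ f z‖ * ‖((EuclideanSpace.single j 1 : Esp u), (0:Esp s))‖ :=
          (fderiv ℝ f z).le_opNorm _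
      _ ≤ K := by rw [hw, mul_one]; exact hK z hz
  have entryXY : ∀ z ∈ D, ∀ (i : Fin u) (j : Fin s), |DxyMat f z i j| ≤ K := by
    intro z hz i j
    have h1 : DxyMat f z i j
        = ((fderiv ℝ f z) ((0:Esp u), (EuclideanSpace.single j 1 : Esp s))).1 i := rfl
    rw [h1]
    have hw : ‖((0:Esp u), (EuclideanSpace.single j 1 : Esp s))‖ = 1 := by
      rw [Prod.norm_def]
      simp [EuclideanSpace.norm_single]
    calc |((fderiv ℝ f z) ((0:Esp u), (EuclideanSpace.single j 1 : Esp s))).1 i|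
        ≤ ‖((fderiv ℝ f z) ((0:Esp u), (EuclideanSpace.single j 1 : Esp s))).1‖ :=
          abs_coord_le_norm _ i
      _ ≤ ‖(fderiv ℝ f z) ((0:Esp u), (EuclideanSpace.single j 1 : Esp s))‖ := norm_fst_le _
      _ ≤ ‖fderiv ℝ f z‖ * ‖((0:Esp u), (EuclideanSpace.single j 1 : Esp s))‖ :=
          (fderiv ℝ f z).le_opNorm _
      _ ≤ K := by rw [hw, mul_one]; exact hK z hz
  have memHullXX : ∀ z ∈ D, DxxMat f z ∈ intervalHull (DxxMat f) D := by
    intro z hz i j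
    exact ⟨csInf_le (hDcomp.bddBelow_image ((contXX i j).continuousOn))
        (mem_image_of_mem _ hz),
      le_csSup (hDcomp.bddAbove_image ((contXX i j).continuousOn)) (mem_image_of_mem _ hz)⟩
  have memHullXY : ∀ z ∈ D, DxyMat f z ∈ intervalHull (DxyMat f) D := by
    intro z hz i j
    exact ⟨csInf_le (hDcomp.bddBelow_image ((contXY i j).continuousOn))
        (mem_image_of_mem _ hz),
      le_csSup (hDcomp.bddAbove_image ((contXY i j).continuousOn)) (mem_image_of_mem _ hz)⟩
  have hullXXentry : ∀ M ∈ intervalHull (DxxMat f) D, ∀ (i j : Fin u), |M i j| ≤ K := by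
    intro M hM i j
    obtain ⟨hlo, hhi⟩ := hM i j
    have h2 : -K ≤ sInf ((fun p => DxxMat f p i j) '' D) := le_csInf (hDne.image _)
      (by rintro x ⟨z, hz, rfl⟩; exact (abs_le.1 (entryXX z hz i j)).1)
    have h3 : sSup ((fun p => DxxMat f p i j) '' D) ≤ K := csSup_le (hDne.image _)
      (by rintro x ⟨z, hz, rfl⟩; exact (abs_le.1 (entryXX z hz i j)).2)
    rw [abs_le]; exact ⟨le_trans h2 hlo, le_trans hhi h3⟩
  have hullXYentry : ∀ M ∈ intervalHull (DxyMat f) D, ∀ (i : Fin u) (j : Fin s),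
      |M i j| ≤ K := by
    intro M hM i j
    obtain ⟨hlo, hhi⟩ := hM i j
    have h2 : -K ≤ sInf ((fun p => DxyMat f p i j) '' D) := le_csInf (hDne.image _)
      (by rintro x ⟨z, hz, rfl⟩; exact (abs_le.1 (entryXY z hz i j)).1)
    have h3 : sSup ((fun p => DxyMat f p i j) '' D) ≤ K := csSup_le (hDne.image _)
      (by rintro x ⟨z, hz, rfl⟩; exact (abs_le.1 (entryXY z hz i j)).2)
    rw [abs_le]; exact ⟨le_trans h2 hlo, le_trans hhi h3⟩
  have hullXXnorm : ∀ M ∈ intervalHull (DxxMat f) D, ‖opOf M‖ ≤ (u*u:ℕ)*K :=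
    fun M hM => opOf_norm_le M K hK0 (hullXXentry M hM)
  have hullXYnorm : ∀ M ∈ intervalHull (DxyMat f) D, ‖opOf M‖ ≤ (u*s:ℕ)*K :=
    fun M hM => opOf_norm_le M K hK0 (hullXYentry M hM)
  have bddAboveXY : BddAbove ((fun M => ‖opOf M‖) '' intervalHull (DxyMat f) D) :=
    ⟨(u*s:ℕ)*K, by rintro x ⟨M, hM, rfl⟩; exact hullXYnorm M hM⟩
  -- the three inner-product estimates
  have estX : ∀ τ, τ ≤ 0 → ‖η τ‖ ≤ L * ‖ζ τ‖ →
      xiArrow L f D * ‖ζ τ‖^2 ≤ ⟪Fx τ, ζ τ⟫ := by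
    intro τ hτ hcone
    by_cases hz0 : ζ τ = 0
    · rw [hz0]
      simp
    haveI : Nontrivial (Esp u) := nontrivial_of_ne _ _ hz0
    obtain ⟨z, hzD, he⟩ := mvtX τ hτ (ζ τ)
    rw [he, inner_add_left]
    have hAle : sInf ((fun M => mlVal (opOf M)) '' intervalHull (DxxMat f) D)
        ≤ mlVal (blockXX (fderiv ℝ f z)) := by
      rw [← opOf_DxxMat]
      apply csInf_le
      · refine ⟨-((u*u:ℕ)*K), ?_⟩
        rintro x ⟨M, hM, rfl⟩
        have hb := LogNormAux.logNorm_le_norm (-(opOf M))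
        rw [norm_neg] at hb
        have h2 := hullXXnorm M hM
        simp only [mlVal]
        linarith
      · exact mem_image_of_mem _ (memHullXX z hzD)
    have hBge : ‖blockXY (fderiv ℝ f z)‖
        ≤ sSup ((fun M => ‖opOf M‖) '' intervalHull (DxyMat f) D) := by
      rw [← opOf_DxyMat]
      exact le_csSup bddAboveXY (mem_image_of_mem _ (memHullXY z hzD))
    have e1 : mlVal (blockXX (fderiv ℝ f z)) * ‖ζ τ‖^2
        ≤ ⟪blockXX (fderiv ℝ f z) (ζ τ), ζ τ⟫ := LogNormAux.mlVal_le_inner _ _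
    have e2 : |⟪blockXY (fderiv ℝ f z) (η τ), ζ τ⟫|
        ≤ ‖blockXY (fderiv ℝ f z)‖ * ‖η τ‖ * ‖ζ τ‖ := by
      calc |⟪blockXY (fderiv ℝ f z) (η τ), ζ τ⟫|
          ≤ ‖blockXY (fderiv ℝ f z) (η τ)‖ * ‖ζ τ‖ := abs_real_inner_le_norm _ _
        _ ≤ ‖blockXY (fderiv ℝ f z)‖ * ‖η τ‖ * ‖ζ τ‖ := by
            have := (blockXY (fderiv ℝ f z)).le_opNorm (η τ)
            nlinarith [norm_nonneg (ζ τ)]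
    have hζpos : 0 < ‖ζ τ‖ := norm_pos_iff.2 hz0
    have hBnn : 0 ≤ sSup ((fun M => ‖opOf M‖) '' intervalHull (DxyMat f) D) :=
      le_trans (norm_nonneg _) hBge
    rw [xiArrow]
    have e3 := (abs_le.1 e2).1
    have e4 : ‖blockXY (fderiv ℝ f z)‖ * ‖η τ‖
        ≤ sSup ((fun M => ‖opOf M‖) '' intervalHull (DxyMat f) D) * (L * ‖ζ τ‖) :=
      mul_le_mul hBge hcone (norm_nonneg _) hBnn
    nlinarith [mul_le_mul_of_nonneg_right hAle (sq_nonneg ‖ζ τ‖), e1,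
      mul_le_mul_of_nonneg_right e4 (norm_nonneg (ζ τ)), hζpos.le]
  have estY : ∀ τ, τ ≤ 0 → η τ ≠ 0 → L * ‖ζ τ‖ ≤ ‖η τ‖ →
      ⟪Fy τ, η τ⟫ ≤ muArrow L f D * ‖η τ‖^2 := by
    intro τ hτ hη0 hcone
    haveI : Nontrivial (Esp s) := nontrivial_of_ne _ _ hη0
    obtain ⟨z, hzD, he⟩ := mvtY τ hτ (η τ)
    rw [he, inner_add_left]
    have hYY : ⟪blockYY (fderiv ℝ f z) (η τ), η τ⟫
        ≤ logNorm (blockYY (fderiv ℝ f z)) * ‖η τ‖^2 := LogNormAux.inner_le_logNorm _ _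
    have hYX : ⟪blockYX (fderiv ℝ f z) (ζ τ), η τ⟫
        ≤ ‖blockYX (fderiv ℝ f z)‖ * ‖ζ τ‖ * ‖η τ‖ := by
      calc ⟪blockYX (fderiv ℝ f z) (ζ τ), η τ⟫
          ≤ ‖blockYX (fderiv ℝ f z) (ζ τ)‖ * ‖η τ‖ := real_inner_le_norm _ _
        _ ≤ ‖blockYX (fderiv ℝ f z)‖ * ‖ζ τ‖ * ‖η τ‖ := by
            have := (blockYX (fderiv ℝ f z)).le_opNorm (ζ τ)
            nlinarith [norm_nonneg (η τ)]
    have hmem : logNorm (blockYY (fderiv ℝ f z)) + (1/L) * ‖blockYX (fderiv ℝ f z)‖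
        ≤ muArrow L f D := by
      apply le_csSup
      · refine ⟨K + (1/L)*K, ?_⟩
        rintro x ⟨z', hz', rfl⟩
        have b1 : logNorm (blockYY (fderiv ℝ f z')) ≤ ‖blockYY (fderiv ℝ f z')‖ :=
          LogNormAux.logNorm_le_norm _
        have b2 := blockYY_norm_le (fderiv ℝ f z')
        have b3 := blockYX_norm_le (fderiv ℝ f z')
        have b4 := hK z' hz'
        have hL1 : (0:ℝ) ≤ 1/L := by positivity
        have b5 : (1/L) * ‖blockYX (fderiv ℝ f z')‖ ≤ (1/L)*K := by
          apply mul_le_mul_of_nonneg_left _ hL1; linarith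
        simp only
        linarith
      · exact mem_image_of_mem _ hzD
    have hζle : ‖ζ τ‖ ≤ (1/L) * ‖η τ‖ := by
      rw [one_div, inv_mul_eq_div]
      exact (le_div_iff₀ hL).2 (by linarith [hcone, mul_comm L ‖ζ τ‖])
    have hYXnn : 0 ≤ ‖blockYX (fderiv ℝ f z)‖ := norm_nonneg _
    nlinarith [hYY, hYX, mul_le_mul_of_nonneg_right hmem (sq_nonneg ‖η τ‖),
      mul_le_mul_of_nonneg_right
        (mul_le_mul_of_nonneg_left hζle hYXnn) (norm_nonneg (η τ)),
      sq_nonneg ‖η τ‖, norm_nonneg (η τ)]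
  have estW : ∀ τ, τ ≤ 0 →
      ⟪Fx τ, ζ τ⟫ + ⟪Fy τ, η τ⟫ ≤ 2*K*(‖ζ τ‖^2 + ‖η τ‖^2) := by
    intro τ hτ
    obtain ⟨z1, hz1, he1⟩ := mvtX τ hτ (ζ τ)
    obtain ⟨z2, hz2, he2⟩ := mvtY τ hτ (η τ)
    rw [he1, he2]
    have b1 : ⟪blockXX (fderiv ℝ f z1) (ζ τ) + blockXY (fderiv ℝ f z1) (η τ), ζ τ⟫
        ≤ (K*‖ζ τ‖ + K*‖η τ‖) * ‖ζ τ‖ := by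
      have c1 : ‖blockXX (fderiv ℝ f z1) (ζ τ) + blockXY (fderiv ℝ f z1) (η τ)‖
          ≤ K*‖ζ τ‖ + K*‖η τ‖ := by
        have d1 : ‖blockXX (fderiv ℝ f z1) (ζ τ)‖ ≤ K*‖ζ τ‖ := by
          have e1 := (blockXX (fderiv ℝ f z1)).le_opNorm (ζ τ)
          have e2 := blockXX_norm_le (fderiv ℝ f z1)
          have e3 := hK z1 hz1
          nlinarith [norm_nonneg (ζ τ)]
        have d2 : ‖blockXY (fderiv ℝ f z1) (η τ)‖ ≤ K*‖η τ‖ := by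
          have e1 := (blockXY (fderiv ℝ f z1)).le_opNorm (η τ)
          have e2 := blockXY_norm_le (fderiv ℝ f z1)
          have e3 := hK z1 hz1
          nlinarith [norm_nonneg (η τ)]
        calc ‖blockXX (fderiv ℝ f z1) (ζ τ) + blockXY (fderiv ℝ f z1) (η τ)‖
            ≤ ‖blockXX (fderiv ℝ f z1) (ζ τ)‖ + ‖blockXY (fderiv ℝ f z1) (η τ)‖ :=
              norm_add_le _ _
          _ ≤ K*‖ζ τ‖ + K*‖η τ‖ := by linarith
      calc ⟪blockXX (fderiv ℝ f z1) (ζ τ) + blockXY (fderiv ℝ f z1) (η τ), ζ τ⟫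
          ≤ ‖blockXX (fderiv ℝ f z1) (ζ τ) + blockXY (fderiv ℝ f z1) (η τ)‖ * ‖ζ τ‖ :=
            real_inner_le_norm _ _
        _ ≤ (K*‖ζ τ‖ + K*‖η τ‖) * ‖ζ τ‖ :=
            mul_le_mul_of_nonneg_right c1 (norm_nonneg _)
    have b2 : ⟪blockYX (fderiv ℝ f z2) (ζ τ) + blockYY (fderiv ℝ f z2) (η τ), η τ⟫
        ≤ (K*‖ζ τ‖ + K*‖η τ‖) * ‖η τ‖ := by
      have c1 : ‖blockYX (fderiv ℝ f z2) (ζ τ) + blockYY (fderiv ℝ f z2) (η τ)‖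
          ≤ K*‖ζ τ‖ + K*‖η τ‖ := by
        have d1 : ‖blockYX (fderiv ℝ f z2) (ζ τ)‖ ≤ K*‖ζ τ‖ := by
          have e1 := (blockYX (fderiv ℝ f z2)).le_opNorm (ζ τ)
          have e2 := blockYX_norm_le (fderiv ℝ f z2)
          have e3 := hK z2 hz2
          nlinarith [norm_nonneg (ζ τ)]
        have d2 : ‖blockYY (fderiv ℝ f z2) (η τ)‖ ≤ K*‖η τ‖ := by
          have e1 := (blockYY (fderiv ℝ f z2)).le_opNorm (η τ)
          have e2 := blockYY_norm_le (fderiv ℝ f z2)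
          have e3 := hK z2 hz2
          nlinarith [norm_nonneg (η τ)]
        calc ‖blockYX (fderiv ℝ f z2) (ζ τ) + blockYY (fderiv ℝ f z2) (η τ)‖
            ≤ ‖blockYX (fderiv ℝ f z2) (ζ τ)‖ + ‖blockYY (fderiv ℝ f z2) (η τ)‖ :=
              norm_add_le _ _
          _ ≤ K*‖ζ τ‖ + K*‖η τ‖ := by linarith
      calc ⟪blockYX (fderiv ℝ f z2) (ζ τ) + blockYY (fderiv ℝ f z2) (η τ), η τ⟫
          ≤ ‖blockYX (fderiv ℝ f z2) (ζ τ) + blockYY (fderiv ℝ f z2) (η τ)‖ * ‖η τ‖ :=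
            real_inner_le_norm _ _
        _ ≤ (K*‖ζ τ‖ + K*‖η τ‖) * ‖η τ‖ :=
            mul_le_mul_of_nonneg_right c1 (norm_nonneg _)
    nlinarith [sq_nonneg (‖ζ τ‖ - ‖η τ‖), norm_nonneg (ζ τ), norm_nonneg (η τ)]
  -- the cone condition
  have cone : ∀ τ, τ ≤ 0 → ‖η τ‖ ≤ L * ‖ζ τ‖ := by
    by_contra hcon
    push_neg at hcon
    obtain ⟨t₀, ht₀, hV₀'⟩ := hcon
    set V : ℝ → ℝ := fun τ => ‖η τ‖^2 - L^2 * ‖ζ τ‖^2 with hVdef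
    have hVt₀ : 0 < V t₀ := by
      have h1 : 0 ≤ L * ‖ζ t₀‖ := by positivity
      simp only [hVdef]
      nlinarith
    have hdV : ∀ τ, τ ≤ 0 →
        HasDerivAt V (2*⟪Fy τ, η τ⟫ - L^2 * (2*⟪Fx τ, ζ τ⟫)) τ := by
      intro τ hτ
      exact (hasDerivAt_norm_sq (hdη τ hτ)).sub
        ((hasDerivAt_norm_sq (hdζ τ hτ)).const_mul (L^2))
    have hVpos_ne : ∀ τ, 0 < V τ → η τ ≠ 0 ∧ L * ‖ζ τ‖ ≤ ‖η τ‖ := by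
      intro τ hV
      have h2 : L^2 * ‖ζ τ‖^2 ≤ ‖η τ‖^2 := by simp only [hVdef] at hV; linarith
      have h3 : L * ‖ζ τ‖ ≤ ‖η τ‖ :=
        le_of_sq_le_sq' (norm_nonneg _) (by nlinarith) (by positivity)
      refine ⟨fun h0 => ?_, h3⟩
      rw [h0, norm_zero] at h3
      have h4 : ‖ζ τ‖ = 0 := by nlinarith [norm_nonneg (ζ τ)]
      simp only [hVdef, h0, norm_zero, h4] at hV
      norm_num at hV
    have hηbound : ∀ τ, τ ≤ 0 → ‖η τ‖^2 ≤ 4*R^2 := by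
      intro τ hτ
      obtain ⟨hm1, hm2⟩ := memD τ hτ
      rw [hD] at hm1 hm2
      have b1 : ‖(γ₁ τ).2‖ ≤ R := mem_closedBall_zero_iff.1 hm1.2
      have b2 : ‖(γ₂ τ).2‖ ≤ R := mem_closedBall_zero_iff.1 hm2.2
      have b3 : ‖η τ‖ ≤ 2*R := by
        calc ‖η τ‖ ≤ ‖(γ₁ τ).2‖ + ‖(γ₂ τ).2‖ := norm_sub_le _ _
          _ ≤ 2*R := by linarith
      nlinarith [norm_nonneg (η τ)]
    by_cases hS : ∃ τ, τ ≤ t₀ ∧ V τ ≤ 0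
    · -- Case B
      set S := {τ : ℝ | τ ≤ t₀ ∧ V τ ≤ 0} with hSdef
      have hSne' : S.Nonempty := hS
      have hSbdd : BddAbove S := ⟨t₀, fun x hx => hx.1⟩
      set t₁ := sSup S with ht₁def
      have ht₁le : t₁ ≤ t₀ := csSup_le hSne' (fun x hx => hx.1)
      have hcontV : ∀ τ, τ ≤ 0 → ContinuousAt V τ := fun τ hτ => (hdV τ hτ).continuousAt
      have hVt₁le : V t₁ ≤ 0 := by
        by_contra hp
        push_neg at hp
        have hev : ∀ᶠ x in nhds t₁, 0 < V x :=
          (hcontV t₁ (ht₁le.trans ht₀)).eventually (eventually_gt_nhds hp)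
        obtain ⟨ε, hε, hball⟩ := Metric.eventually_nhds_iff.1 hev
        obtain ⟨x, hxS, hxgt⟩ := exists_lt_of_lt_csSup hSne'
          (show t₁ - ε < t₁ by linarith)
        have hxle : x ≤ t₁ := le_csSup hSbdd hxS
        have hdist : dist x t₁ < ε := by
          rw [Real.dist_eq, abs_lt]; constructor <;> linarith
        exact absurd (hball hdist) (not_lt.2 hxS.2)
      have ht₁lt : t₁ < t₀ :=
        lt_of_le_of_ne ht₁le (fun he => by rw [he] at hVt₁le; linarith)
      have hVpos : ∀ x ∈ Ioc t₁ t₀, 0 < V x := by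
        intro x hx
        by_contra hnp
        push_neg at hnp
        have hmem : x ∈ S := ⟨hx.2, hnp⟩
        exact absurd (le_csSup hSbdd hmem) (not_le.2 hx.1)
      have hVt₁ge : 0 ≤ V t₁ := by
        have htend : Tendsto V (nhdsWithin t₁ (Ioi t₁)) (nhds (V t₁)) :=
          (hcontV t₁ (ht₁le.trans ht₀)).continuousWithinAt
        refine ge_of_tendsto htend ?_
        filter_upwards [Ioc_mem_nhdsGT_of_mem ⟨le_refl t₁, ht₁lt⟩] with x hx
        exact (hVpos x hx).le
      have hVt₁ : V t₁ = 0 := le_antisymm hVt₁le hVt₁ge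
      by_cases hζ₁ : ζ t₁ = 0
      · -- B2: both components vanish at t₁; use Lipschitz-type estimate
        have hη₁ : η t₁ = 0 := by
          have h5 : ‖η t₁‖^2 = 0 := by
            simp only [hVdef, hζ₁, norm_zero] at hVt₁
            nlinarith [hVt₁]
          have := pow_eq_zero_iff (n := 2) (by norm_num) |>.1 h5
          exact norm_eq_zero.1 this
        set W : ℝ → ℝ := fun τ => ‖ζ τ‖^2 + ‖η τ‖^2 with hW
        have hWd : ∀ τ, τ ≤ 0 → HasDerivAt W (2*⟪Fx τ, ζ τ⟫ + 2*⟪Fy τ, η τ⟫) τ :=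
          fun τ hτ => (hasDerivAt_norm_sq (hdζ τ hτ)).add (hasDerivAt_norm_sq (hdη τ hτ))
        have hWt₁ : W t₁ = 0 := by simp [hW, hζ₁, hη₁]
        have hmono := le_of_deriv_nonpos (a := t₁) (b := t₀)
          (g := fun x => W x * Real.exp (-(4*K)*x))
          (g' := fun x => (2*⟪Fx x, ζ x⟫ + 2*⟪Fy x, η x⟫) * Real.exp (-(4*K)*x)
            + W x * (Real.exp (-(4*K)*x) * (-(4*K)))) ht₁lt.le
          (fun x hx => by
            have hd1 : HasDerivAt (fun y : ℝ => -(4*K)*y) (-(4*K)) x := by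
              simpa using (hasDerivAt_id x).const_mul (-(4*K))
            exact (hWd x (hx.2.trans ht₀)).mul hd1.exp)
          (fun x hx => by
            have h2 := estW x (hx.2.trans ht₀)
            have h3 : (0:ℝ) < Real.exp (-(4*K)*x) := Real.exp_pos _
            have h4 : 0 ≤ W x := by positivity
            have h5 : W x = ‖ζ x‖^2 + ‖η x‖^2 := rfl
            rw [h5]
            nlinarith [mul_le_mul_of_nonneg_right h2 h3.le])
        have hWt₀pos : 0 < W t₀ := by
          simp only [hVdef] at hVt₀
          simp only [hW]
          nlinarith [norm_nonneg (ζ t₀), norm_nonneg (η t₀), sq_nonneg (L*‖ζ t₀‖)]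
        have e3 : 0 < Real.exp (-(4*K)*t₀) := Real.exp_pos _
        rw [hWt₁] at hmono
        nlinarith
      · -- B1: derivative of V at t₁ is negative, contradiction
        haveI : Nontrivial (Esp u) := nontrivial_of_ne _ _ hζ₁
        have hζpos : 0 < ‖ζ t₁‖ := norm_pos_iff.2 hζ₁
        have hsqeq : ‖η t₁‖^2 = L^2 * ‖ζ t₁‖^2 := by
          simp only [hVdef] at hVt₁; linarith
        have hnormeq : ‖η t₁‖ = L * ‖ζ t₁‖ := by
          have h3 : (0:ℝ) ≤ L * ‖ζ t₁‖ := by positivity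
          refine le_antisymm
            (le_of_sq_le_sq' h3 (by nlinarith) (norm_nonneg _))
            (le_of_sq_le_sq' (norm_nonneg _) (by nlinarith) h3)
        have hη₁ : η t₁ ≠ 0 := by
          intro h0
          rw [h0, norm_zero] at hnormeq
          nlinarith
        have ht₁0 : t₁ ≤ 0 := ht₁le.trans ht₀
        have hEX := estX t₁ ht₁0 (le_of_eq hnormeq)
        have hEY := estY t₁ ht₁0 hη₁ (le_of_eq hnormeq.symm)
        have hv := deriv_nonneg_of_right_pos ht₁lt (hdV t₁ ht₁0) hVt₁ hVpos
        have hp2 : 0 < L^2 * ‖ζ t₁‖^2 := by positivity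
        nlinarith [hv, hEX, hEY, hsqeq, hmu, hxi,
          mul_pos hp2 (show 0 < xiArrow L f D - muArrow L f D by linarith)]
    · -- Case A: V stays positive on (-∞, t₀]; backward blowup of ‖η‖²
      push_neg at hS
      -- hS : ∀ τ ≤ t₀, 0 < V τ
      set μ := muArrow L f D with hμdef
      have hq' : ∀ τ, τ ≤ t₀ → 2*⟪Fy τ, η τ⟫ ≤ 2*μ*‖η τ‖^2 := by
        intro τ hτ
        obtain ⟨hne, hge⟩ := hVpos_ne τ (hS τ hτ)
        have := estY τ (hτ.trans ht₀) hne hge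
        linarith
      have key : ∀ t', t' ≤ t₀ → ‖η t₀‖^2 * Real.exp (-(2*μ)*t₀)
          ≤ ‖η t'‖^2 * Real.exp (-(2*μ)*t') := by
        intro t' ht'
        have hmono := le_of_deriv_nonpos (a := t') (b := t₀)
          (g := fun x => ‖η x‖^2 * Real.exp (-(2*μ)*x))
          (g' := fun x => 2*⟪Fy x, η x⟫ * Real.exp (-(2*μ)*x)
            + ‖η x‖^2 * (Real.exp (-(2*μ)*x) * (-(2*μ)))) ht'
          (fun x hx => by
            have hd1 : HasDerivAt (fun y : ℝ => -(2*μ)*y) (-(2*μ)) x := by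
              simpa using (hasDerivAt_id x).const_mul (-(2*μ))
            exact (hasDerivAt_norm_sq (hdη x (hx.2.trans ht₀))).mul hd1.exp)
          (fun x hx => by
            have h2 := hq' x hx.2
            have h3 : (0:ℝ) < Real.exp (-(2*μ)*x) := Real.exp_pos _
            nlinarith [mul_le_mul_of_nonneg_right h2 h3.le])
        exact hmono
      have hq₀pos : 0 < ‖η t₀‖^2 := by
        obtain ⟨hne, _⟩ := hVpos_ne t₀ hVt₀
        have := norm_pos_iff.2 hne
        positivity
      set arg : ℝ := 4*R^2/(‖η t₀‖^2) + 1 with harg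
      have harg1 : 1 < arg := by
        have h6 : 0 < 4*R^2/(‖η t₀‖^2) := by positivity
        simp only [harg]
        linarith
      have hμpos : 0 < -(2*μ) := by simp only [hμdef]; linarith
      set s₀ : ℝ := Real.log arg / (-(2*μ)) with hs₀
      have hs₀pos : 0 < s₀ := div_pos (Real.log_pos harg1) hμpos
      have ht' : t₀ - s₀ ≤ t₀ := by linarith
      have hkey := key (t₀ - s₀) ht'
      have hlogeq : -(2*μ) * s₀ = Real.log arg := by
        have hne : -(2*μ) ≠ 0 := ne_of_gt hμpos
        rw [hs₀, mul_comm, div_mul_cancel₀ _ hne]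
      have hexpval : Real.exp (-(2*μ)*s₀) = arg := by
        rw [hlogeq, Real.exp_log (by linarith : (0:ℝ) < arg)]
      have hsplit : Real.exp (-(2*μ)*(t₀ - s₀)) * Real.exp (-(2*μ)*s₀)
          = Real.exp (-(2*μ)*t₀) := by
        rw [← Real.exp_add]
        congr 1
        ring
      rw [← hsplit, hexpval] at hkey
      have e1 : 0 < Real.exp (-(2*μ)*(t₀-s₀)) := Real.exp_pos _
      have hq2 : ‖η t₀‖^2 * arg ≤ ‖η (t₀ - s₀)‖^2 := by
        nlinarith [hkey, e1]
      have hb := hηbound (t₀ - s₀) (by linarith : t₀ - s₀ ≤ 0)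
      have hargval : ‖η t₀‖^2 * arg = 4*R^2 + ‖η t₀‖^2 := by
        simp only [harg]
        rw [mul_add, mul_one, mul_div_cancel₀ _ hq₀pos.ne']
      nlinarith
  -- Gronwall-type estimate for ‖ζ‖² going backwards
  have grow : ∀ τ, τ ≤ 0 → 2*(xiArrow L f D * ‖ζ τ‖^2) ≤ 2*⟪Fx τ, ζ τ⟫ := by
    intro τ hτ
    have := estX τ hτ (cone τ hτ)
    linarith
  have hmono := le_of_deriv_nonneg (a := -t) (b := 0)
    (g := fun x => ‖ζ x‖^2 * Real.exp (-(2*xiArrow L f D)*x))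
    (g' := fun x => 2*⟪Fx x, ζ x⟫ * Real.exp (-(2*xiArrow L f D)*x)
      + ‖ζ x‖^2 * (Real.exp (-(2*xiArrow L f D)*x) * (-(2*xiArrow L f D)))) (by linarith)
    (fun x hx => by
      have hd1 : HasDerivAt (fun y : ℝ => -(2*xiArrow L f D)*y) (-(2*xiArrow L f D)) x := by
        simpa using (hasDerivAt_id x).const_mul (-(2*xiArrow L f D))
      exact (hasDerivAt_norm_sq (hdζ x hx.2)).mul hd1.exp)
    (fun x hx => by
      have h2 := grow x hx.2
      have h3 : (0:ℝ) < Real.exp (-(2*xiArrow L f D)*x) := Real.exp_pos _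
      nlinarith [mul_le_mul_of_nonneg_right h2 h3.le])
  -- hmono : ‖ζ (-t)‖² * exp(-(2ξ)(-t)) ≤ ‖ζ 0‖² * exp 0
  have hmono' : ‖ζ (-t)‖^2 * Real.exp (2*xiArrow L f D*t) ≤ ‖ζ 0‖^2 := by
    have h4 : -(2*xiArrow L f D)*(-t) = 2*xiArrow L f D*t := by ring
    have h5 : Real.exp (-(2*xiArrow L f D)*0) = 1 := by norm_num
    rw [h4] at hmono
    rw [h5, mul_one] at hmono
    exact hmono
  have hζbound : ‖ζ (-t)‖ ≤ Real.exp (-(xiArrow L f D)*t) * ‖ζ 0‖ := by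
    have e1 : 0 < Real.exp (2*xiArrow L f D*t) := Real.exp_pos _
    have h6 : (Real.exp (-(xiArrow L f D)*t))^2 = (Real.exp (2*xiArrow L f D*t))⁻¹ := by
      rw [sq, ← Real.exp_add, ← Real.exp_neg]
      congr 1
      ring
    have e2 : ‖ζ (-t)‖^2 ≤ (Real.exp (-(xiArrow L f D)*t) * ‖ζ 0‖)^2 := by
      rw [mul_pow, h6]
      rw [show (Real.exp (2*xiArrow L f D*t))⁻¹ * ‖ζ 0‖^2
          = ‖ζ 0‖^2 / Real.exp (2*xiArrow L f D*t) by rw [div_eq_mul_inv]; ring]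
      exact (le_div_iff₀ e1).2 hmono'
    exact le_of_sq_le_sq' (by positivity) e2 (norm_nonneg _)
  -- final assembly
  have hconet : ‖η (-t)‖ ≤ L * ‖ζ (-t)‖ := cone (-t) (by linarith)
  have hs1 : 1 ≤ Real.sqrt (1+L^2) := by
    have h7 := Real.sqrt_le_sqrt (show (1:ℝ) ≤ 1 + L^2 by nlinarith)
    rwa [Real.sqrt_one] at h7
  have hs2 : L ≤ Real.sqrt (1+L^2) := by
    have h7 := Real.sqrt_le_sqrt (show L^2 ≤ 1 + L^2 by nlinarith)
    rwa [Real.sqrt_sq hL.le] at h7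
  have hδ : γ₁ (-t) - γ₂ (-t) = (ζ (-t), η (-t)) := rfl
  rw [hδ, Prod.norm_def]
  have hζ00 : (γ₁ 0).1 - (γ₂ 0).1 = ζ 0 := rfl
  rw [hζ00]
  have hexpnn : 0 ≤ Real.exp (-(xiArrow L f D)*t) := (Real.exp_pos _).le
  have hζ0nn : 0 ≤ ‖ζ 0‖ := norm_nonneg _
  have hbase : 0 ≤ Real.exp (-(xiArrow L f D)*t) * ‖ζ 0‖ := by positivity
  apply max_le
  · calc ‖ζ (-t)‖ ≤ Real.exp (-(xiArrow L f D)*t) * ‖ζ 0‖ := hζbound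
      _ ≤ 2 * Real.sqrt (1+L^2) * (Real.exp (-(xiArrow L f D)*t) * ‖ζ 0‖) := by
          nlinarith [hbase]
      _ = 2 * Real.sqrt (1+L^2) * Real.exp (-(xiArrow L f D)*t) * ‖ζ 0‖ := by ring
  · calc ‖η (-t)‖ ≤ L * ‖ζ (-t)‖ := hconet
      _ ≤ L * (Real.exp (-(xiArrow L f D)*t) * ‖ζ 0‖) :=
          mul_le_mul_of_nonneg_left hζbound hL.le
      _ ≤ 2 * Real.sqrt (1+L^2) * (Real.exp (-(xiArrow L f D)*t) * ‖ζ 0‖) := by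
          nlinarith [hbase]
      _ = 2 * Real.sqrt (1+L^2) * Real.exp (-(xiArrow L f D)*t) * ‖ζ 0‖ := by ring
end

section
/- Suppose that h(a_l) < 0 and h(a_r) > 0. Then there exists ψ ∈ A = [a_l, a_r] for which the system p' = f(p, ψ) has a homoclinic orbit to p*_ψ: a solution γ : ℝ → ℝ³ with γ not identically equal to p*_ψ and lim_{t→−∞} γ(t) = p*_ψ = lim_{t→+∞} γ(t). -/
open Filter Set Metric

/-- **Theorem (existence of a homoclinic orbit from a sign change of `h`).**
Setup: `f : ℝ³ × ℝ → ℝ³` is `C¹` (we write `ℝ³ = ℝ × ℝ²` with coordinates `(x,y)`),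
`Φ_t(·, a)` is the flow of `p' = f(p,a)`, `p*_a` is a family of fixed points lying in
`int D`, `D = [-R,R] × B̄_s(R)`; for each `a ∈ A = [a_l, a_r]` the local unstable and
stable manifolds of `p*_a` in `D` are graphs of functions `wᵘ_a : [-R,R] → B̄_s(R)` and
`wˢ_a : B̄_s(R) → [-R,R]` depending continuously on `a`; `pᵘ_a = (R, wᵘ_a(R))`, `T > 0`
with `Φ_T(pᵘ_a, a) ∈ D`, and `h(a) = π_x Φ_T(pᵘ_a,a) - wˢ_a(π_y Φ_T(pᵘ_a,a))` is
continuous.  If `h(a_l) < 0` and `h(a_r) > 0`, then there exists `ψ ∈ A` for which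
`p' = f(p,ψ)` has a homoclinic orbit to `p*_ψ`. -/
theorem homoclinic_from_sign_change (al ar R T : ℝ) (hal : al ≤ ar) (hR : 0 < R)
    (hT : 0 < T)
    (f : (ℝ × EuclideanSpace ℝ (Fin 2)) → ℝ → (ℝ × EuclideanSpace ℝ (Fin 2)))
    (hf : ContDiff ℝ 1 (fun q : (ℝ × EuclideanSpace ℝ (Fin 2)) × ℝ => f q.1 q.2))
    (Φ : ℝ → (ℝ × EuclideanSpace ℝ (Fin 2)) → ℝ → (ℝ × EuclideanSpace ℝ (Fin 2)))
    (hΦ0 : ∀ p a, Φ 0 p a = p)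
    (hΦ : ∀ (p : ℝ × EuclideanSpace ℝ (Fin 2)) (a t : ℝ),
      HasDerivAt (fun τ => Φ τ p a) (f (Φ t p a) a) t)
    (pstar : ℝ → ℝ × EuclideanSpace ℝ (Fin 2))
    (hpstar_cont : ContinuousOn pstar (Set.Icc al ar))
    (hpstar_fix : ∀ a ∈ Set.Icc al ar, f (pstar a) a = 0)
    (D : Set (ℝ × EuclideanSpace ℝ (Fin 2)))
    (hD : D = Set.Icc (-R) R ×ˢ closedBall (0 : EuclideanSpace ℝ (Fin 2)) R)
    (hpstarD : ∀ a ∈ Set.Icc al ar, pstar a ∈ interior D)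
    (wu : ℝ → ℝ → EuclideanSpace ℝ (Fin 2))
    (ws : ℝ → EuclideanSpace ℝ (Fin 2) → ℝ)
    (hwu_cont : ContinuousOn (fun q : ℝ × ℝ => wu q.1 q.2)
      (Set.Icc al ar ×ˢ Set.Icc (-R) R))
    (hws_cont : ContinuousOn (fun q : ℝ × EuclideanSpace ℝ (Fin 2) => ws q.1 q.2)
      (Set.Icc al ar ×ˢ closedBall (0 : EuclideanSpace ℝ (Fin 2)) R))
    (hwu_graph : ∀ a ∈ Set.Icc al ar,
      {p | p ∈ D ∧ (∀ t : ℝ, t ≤ 0 → Φ t p a ∈ D) ∧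
          Tendsto (fun t => Φ t p a) atBot (nhds (pstar a))}
        = {p | ∃ x ∈ Set.Icc (-R) R, p = (x, wu a x)})
    (hws_graph : ∀ a ∈ Set.Icc al ar,
      {p | p ∈ D ∧ (∀ t : ℝ, 0 ≤ t → Φ t p a ∈ D) ∧
          Tendsto (fun t => Φ t p a) atTop (nhds (pstar a))}
        = {p | ∃ y ∈ closedBall (0 : EuclideanSpace ℝ (Fin 2)) R, p = (ws a y, y)})
    (hreturn : ∀ a ∈ Set.Icc al ar, Φ T (R, wu a R) a ∈ D)
    (h : ℝ → ℝ)
    (hdef : ∀ a ∈ Set.Icc al ar,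
      h a = (Φ T (R, wu a R) a).1 - ws a (Φ T (R, wu a R) a).2)
    (hcont : ContinuousOn h (Set.Icc al ar))
    (hhl : h al < 0) (hhr : h ar > 0) :
    ∃ ψ ∈ Set.Icc al ar, ∃ γ : ℝ → ℝ × EuclideanSpace ℝ (Fin 2),
      (∀ t : ℝ, HasDerivAt γ (f (γ t) ψ) t) ∧
      (¬ ∀ t : ℝ, γ t = pstar ψ) ∧
      Tendsto γ atBot (nhds (pstar ψ)) ∧
      Tendsto γ atTop (nhds (pstar ψ)) := by

  -- Step 1: IVT gives ψ with h ψ = 0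
  obtain ⟨ψ, hψA, hψ0⟩ : ∃ ψ ∈ Set.Icc al ar, h ψ = 0 := by
    have : (0 : ℝ) ∈ Set.Icc (h al) (h ar) := ⟨hhl.le, hhr.le⟩
    have := intermediate_value_Icc hal hcont this
    obtain ⟨ψ, hψ, hψ0⟩ := this
    exact ⟨ψ, hψ, hψ0⟩
  set pu : ℝ × EuclideanSpace ℝ (Fin 2) := (R, wu ψ R) with hpu
  set q : ℝ × EuclideanSpace ℝ (Fin 2) := Φ T pu ψ with hq
  -- pu is on the unstable manifold
  have hpu_mem : pu ∈ {p | p ∈ D ∧ (∀ t : ℝ, t ≤ 0 → Φ t p ψ ∈ D) ∧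
      Tendsto (fun t => Φ t p ψ) atBot (nhds (pstar ψ))} := by
    rw [hwu_graph ψ hψA]
    exact ⟨R, ⟨by linarith, le_rfl⟩, rfl⟩
  obtain ⟨hpuD, hpu_neg, hpu_tendsto⟩ := hpu_mem
  -- q is on the stable manifold
  have hqD : q ∈ D := hreturn ψ hψA
  have hq2 : q.2 ∈ closedBall (0 : EuclideanSpace ℝ (Fin 2)) R := by
    rw [hD] at hqD; exact hqD.2
  have hq1 : q.1 = ws ψ q.2 := by
    have := hdef ψ hψA
    rw [hψ0] at this
    linarith [this]
  have hq_mem : q ∈ {p | p ∈ D ∧ (∀ t : ℝ, 0 ≤ t → Φ t p ψ ∈ D) ∧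
      Tendsto (fun t => Φ t p ψ) atTop (nhds (pstar ψ))} := by
    rw [hws_graph ψ hψA]
    exact ⟨q.2, hq2, by rw [← hq1]⟩
  obtain ⟨_, _, hq_tendsto⟩ := hq_mem
  -- define the homoclinic orbit
  refine ⟨ψ, hψA, fun t => if t ≤ T then Φ t pu ψ else Φ (t - T) q ψ, ?_, ?_, ?_, ?_⟩
  · -- derivative
    intro t
    set γ : ℝ → ℝ × EuclideanSpace ℝ (Fin 2) :=
      fun t => if t ≤ T then Φ t pu ψ else Φ (t - T) q ψ with hγ
    have hg2 : ∀ s : ℝ, HasDerivAt (fun τ => Φ (τ - T) q ψ) (f (Φ (s - T) q ψ) ψ) s := by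
      intro s
      have h1 : HasDerivAt (fun τ : ℝ => τ - T) 1 s := by
        simpa using (hasDerivAt_id s).sub_const T
      have := (hΦ q ψ (s - T)).scomp s h1
      simpa [Function.comp_def] using this
    rcases lt_trichotomy t T with hlt | heq | hgt
    · have hev : (fun τ => Φ τ pu ψ) =ᶠ[nhds t] γ := by
        filter_upwards [Iio_mem_nhds hlt] with s hs
        simp [hγ, (le_of_lt (Set.mem_Iio.mp hs))]
      have hγt : γ t = Φ t pu ψ := by simp [hγ, hlt.le]
      rw [hγt]
      exact (hΦ pu ψ t).congr_of_eventuallyEq hev.symm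
    · subst heq
      have hγt : γ t = Φ t pu ψ := by simp [hγ]
      have hd1 : HasDerivWithinAt γ (f (Φ t pu ψ) ψ) (Set.Iic t) t := by
        refine ((hΦ pu ψ t).hasDerivWithinAt).congr ?_ hγt
        intro s hs
        simp [hγ, (Set.mem_Iic.mp hs)]
      have hd2 : HasDerivWithinAt γ (f (Φ t pu ψ) ψ) (Set.Ici t) t := by
        have key : ∀ s ∈ Set.Ici t, γ s = Φ (s - t) q ψ := by
          intro s hs
          rcases eq_or_lt_of_le (Set.mem_Ici.mp hs) with rfl | hlt'
          · simp [hγ, hΦ0, hq]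
          · simp [hγ, not_le.mpr hlt']
        have hval : Φ (t - t) q ψ = Φ t pu ψ := by simp [hΦ0, hq]
        have := (hg2 t).hasDerivWithinAt (s := Set.Ici t)
        rw [hval] at this
        exact this.congr key (key t Set.self_mem_Ici)
      have := hd1.union hd2
      rw [Set.Iic_union_Ici] at this
      rw [hγt]
      exact hasDerivWithinAt_univ.mp this
    · have hev : (fun τ => Φ (τ - T) q ψ) =ᶠ[nhds t] γ := by
        filter_upwards [Ioi_mem_nhds hgt] with s hs
        simp [hγ, not_le.mpr (Set.mem_Ioi.mp hs)]
      have hγt : γ t = Φ (t - T) q ψ := by simp [hγ, not_le.mpr hgt]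
      rw [hγt]
      exact (hg2 t).congr_of_eventuallyEq hev.symm
  · -- not identically pstar
    intro hall
    have h0 : (if (0:ℝ) ≤ T then Φ 0 pu ψ else Φ (0 - T) q ψ) = pstar ψ := hall 0
    rw [if_pos hT.le, hΦ0] at h0
    have hint : pstar ψ ∈ interior D := hpstarD ψ hψA
    rw [hD, interior_prod_eq, interior_Icc] at hint
    have : (pstar ψ).1 < R := hint.1.2
    rw [← h0] at this
    exact lt_irrefl R this
  · -- limit at -∞
    refine hpu_tendsto.congr' ?_
    filter_upwards [eventually_le_atBot T] with s hs
    simp [hs]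
  · -- limit at +∞
    have : Tendsto (fun s : ℝ => Φ (s - T) q ψ) atTop (nhds (pstar ψ)) :=
      hq_tendsto.comp (tendsto_atTop_add_const_right atTop (-T) tendsto_id)
    refine this.congr' ?_
    filter_upwards [eventually_gt_atTop T] with s hs
    simp [not_le.mpr hs]
end

section
/- Let B : ℝ → M₃(ℝ) be continuous and let ξ₁, ξ₂ : ℝ → ℝ³ be differentiable curves satisfying ξᵢ'(t) = B(t)·ξᵢ(t) for i = 1, 2. Then the cross product η(t) = ξ₁(t) × ξ₂(t) satisfies the linear ODE η'(t) = −(B(t)ᵀ − tr(B(t))·I)·η(t), where I is the 3×3 identity matrix and tr denotes the trace. -/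
lemma cross_identity (M : Matrix (Fin 3) (Fin 3) ℝ) (u v : Fin 3 → ℝ) :
    crossProduct (M.mulVec u) v + crossProduct u (M.mulVec v)
      = -((M.transpose - M.trace • (1 : Matrix (Fin 3) (Fin 3) ℝ)).mulVec (crossProduct u v)) := by
  funext i
  fin_cases i <;>
    simp [crossProduct, Matrix.mulVec, dotProduct, Fin.sum_univ_three,
      Matrix.trace, Matrix.diag, Matrix.one_apply, Matrix.transpose_apply] <;> ring

lemma cross_hasDerivAt {f g : ℝ → Fin 3 → ℝ} {f' g' : Fin 3 → ℝ} {t : ℝ}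
    (hf : HasDerivAt f f' t) (hg : HasDerivAt g g' t) :
    HasDerivAt (fun τ => crossProduct (f τ) (g τ))
      (crossProduct f' (g t) + crossProduct (f t) g') t := by
  rw [hasDerivAt_pi] at hf hg ⊢
  intro i
  fin_cases i <;>
    · simp only [crossProduct, LinearMap.mk₂_apply, Matrix.cons_val_zero, Matrix.cons_val_one,
        Matrix.head_cons, Pi.add_apply, Matrix.cons_val_fin_one, Matrix.cons_val_two, Matrix.tail_cons]
      convert (((hf _).fun_mul (hg _)).fun_sub ((hf _).fun_mul (hg _))) using 1
      · rfl
      try simp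
      ring

/-- **Lemma (ODE for the cross product of two solutions of a linear system).**
If `ξ₁, ξ₂ : ℝ → ℝ³` satisfy `ξᵢ' = B(t)ξᵢ` with `B : ℝ → M₃(ℝ)` continuous, then
`η(t) = ξ₁(t) × ξ₂(t)` satisfies `η' = -(B(t)ᵀ - tr(B(t))·I) η`. -/
theorem crossProduct_solution_ode (B : ℝ → Matrix (Fin 3) (Fin 3) ℝ)
    (hB : Continuous B)
    (ξ₁ ξ₂ : ℝ → Fin 3 → ℝ)
    (h1 : ∀ t : ℝ, HasDerivAt ξ₁ ((B t).mulVec (ξ₁ t)) t)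
    (h2 : ∀ t : ℝ, HasDerivAt ξ₂ ((B t).mulVec (ξ₂ t)) t) :
    ∀ t : ℝ,
      HasDerivAt (fun τ => crossProduct (ξ₁ τ) (ξ₂ τ))
        (-(((B t).transpose - (B t).trace • (1 : Matrix (Fin 3) (Fin 3) ℝ)).mulVec
            (crossProduct (ξ₁ t) (ξ₂ t)))) t := by
  intro t
  rw [← cross_identity]
  exact cross_hasDerivAt (h1 t) (h2 t)
end
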